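/- arXiv:2002.07102 — 4 statements merged into one kernel-verified Lean document; each statement's English description precedes it below -/
import Mathlib

section
/- Let F be a formal diffeomorphism of (C^n,0) with an invariant formal curve Γ of multiplicity ν at the origin. Then the inner eigenvalue λ_Γ = (F|_Γ)'(0) and the tangent eigenvalue λ(Γ) (the eigenvalue of D_0F corresponding to the tangent direction of Γ) satisfy (λ_Γ)^ν = λ(Γ). -/
open MvPowerSeries

noncomputable section

/-- Formal power series in `n` variables over `ℂ`. -/
abbrev PS (n : ℕ) := MvPowerSeries (Fin n) ℂ

/-- A formal diffeomorphism of `(ℂ^n,0)`, modelled as a `ℂ`-algebra automorphism of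
`ℂ[[x₁,…,xₙ]]` (acting by composition `g ↦ g ∘ F`). -/
abbrev FormalDiffeo (n : ℕ) := PS n ≃ₐ[ℂ] PS n

/-- A formal (singular) vector field on `(ℂ^n,0)`: a derivation of `ℂ[[x₁,…,xₙ]]`. -/
abbrev FormalVF (n : ℕ) := Derivation ℂ (PS n) (PS n)

/-- The space of `k`-jets: truncated coefficient data of the components of a diffeomorphism. -/
abbrev JetSpace (n k : ℕ) :=
  Fin n → {d : Fin n →₀ ℕ // (d.sum fun _ e => e) ≤ k} → ℂ

/-- The `k`-jet of a formal diffeomorphism. -/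
def jetOf (n k : ℕ) (F : FormalDiffeo n) : JetSpace n k :=
  fun i d => coeff d.1 (F (X i))

/-- Polynomial functions on the jet space: the algebra generated by coordinates. -/
def polyFuns (n k : ℕ) : Subalgebra ℂ (JetSpace n k → ℂ) :=
  Algebra.adjoin ℂ {φ | ∃ i d, φ = fun J => J i d}

/-- The Zariski topology on the jet space. -/
def zTop (n k : ℕ) : TopologicalSpace (JetSpace n k) :=
  .generateFrom {U | ∃ φ ∈ polyFuns n k, U = {x | φ x ≠ 0}}

/-- The pro-algebraic (Zariski) closure of a set of formal diffeomorphisms: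
those whose `k`-jet lies, for every `k`, in the Zariski closure of the set of `k`-jets. -/
def proAlgClosure {n : ℕ} (G : Set (FormalDiffeo n)) : Set (FormalDiffeo n) :=
  {F | ∀ k, jetOf n k F ∈ @closure _ (zTop n k) (jetOf n k '' G)}

/-- The connected component of the identity of the pro-algebraic closure:
those diffeomorphisms whose `k`-jet lies, for every `k`, in the Zariski-connected component
of the jet of the identity inside the Zariski closure of the `k`-jets. -/
def proAlgIdComp {n : ℕ} (G : Set (FormalDiffeo n)) : Set (FormalDiffeo n) :=
  {F | ∀ k, jetOf n k F ∈
    @connectedComponentIn _ (zTop n k)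
      (@closure _ (zTop n k) (jetOf n k '' G)) (jetOf n k 1)}

/-- `j`-th iterate of a derivation, as a map. -/
def derivPow {n : ℕ} (Y : FormalVF n) (j : ℕ) (g : PS n) : PS n :=
  ((Y.toLinearMap : PS n →ₗ[ℂ] PS n) ^ j) g

/-- The time-one flow `Exp(Y)` applied to `g`, namely `∑_j Y^j(g)/j!`, where the
(countable) sum of each coefficient is taken in `ℂ`. -/
def expSeries {n : ℕ} (Y : FormalVF n) (g : PS n) : PS n :=
  fun d => ∑' j : ℕ, ((j.factorial : ℂ))⁻¹ * coeff d (derivPow Y j g)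

/-- `F` is the time-one flow (exponential) of the formal vector field `Y`. -/
def IsExpOf {n : ℕ} (F : FormalDiffeo n) (Y : FormalVF n) : Prop :=
  ∀ g : PS n, F g = expSeries Y g

/-- A formal vector field is singular if it vanishes at the origin. -/
def IsSingularVF {n : ℕ} (Y : FormalVF n) : Prop :=
  ∀ i : Fin n, constantCoeff (Y (X i)) = 0

/-- `Y` belongs to the Lie algebra of the pro-algebraic closure of `G`
(characterized by all its time-`t` flows lying in the closure). -/
def InLieAlgOf {n : ℕ} (G : Set (FormalDiffeo n)) (Y : FormalVF n) : Prop :=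
  ∀ t : ℂ, ∃ F : FormalDiffeo n, F ∈ proAlgClosure G ∧ IsExpOf F (t • Y)

/-- `Y` is an infinitesimal generator of `F`. -/
def IsInfGen {n : ℕ} (Y : FormalVF n) (F : FormalDiffeo n) : Prop :=
  IsSingularVF Y ∧ IsExpOf F Y ∧ InLieAlgOf (Subgroup.zpowers F : Set (FormalDiffeo n)) Y

/-- The linear part `D₀F` of a formal diffeomorphism. -/
def linPartD {n : ℕ} (F : FormalDiffeo n) : Matrix (Fin n) (Fin n) ℂ :=
  Matrix.of fun i j => coeff (Finsupp.single j 1) (F (X i))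

/-- The linear part `D₀Y` of a formal vector field. -/
def linPartV {n : ℕ} (Y : FormalVF n) : Matrix (Fin n) (Fin n) ℂ :=
  Matrix.of fun i j => coeff (Finsupp.single j 1) (Y (X i))

/-- Substitution of a tuple of one-variable power series (a formal curve) into a
multivariate power series. -/
def substCurve {n : ℕ} (γ : Fin n → PowerSeries ℂ) (f : PS n) : PowerSeries ℂ :=
  PowerSeries.mk fun m =>
    ∑' e : (Fin n →₀ ℕ), coeff e f * PowerSeries.coeff m (∏ i, (γ i) ^ (e i))

/-- Substitution (composition) of one-variable power series: `g ∘ θ`. -/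
def substPS (θ g : PowerSeries ℂ) : PowerSeries ℂ :=
  PowerSeries.mk fun m =>
    ∑' e : ℕ, PowerSeries.coeff e g * PowerSeries.coeff m (θ ^ e)

/-- Substitution of a tuple of `n`-variable power series into an `n`-variable power series. -/
def substMv {n : ℕ} (σ : Fin n → PS n) (f : PS n) : PS n :=
  fun d => ∑' e : (Fin n →₀ ℕ), coeff e f * coeff d (∏ i, (σ i) ^ (e i))

/-- `γ` (with `θ`) is a formal invariant curve of the formal diffeomorphism `F`:
`γ` is a nonzero tuple of power series without constant term, `θ` is a formal
diffeomorphism in one variable, and `F ∘ γ = γ ∘ θ`. -/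
def IsInvariantCurve {n : ℕ} (F : FormalDiffeo n) (γ : Fin n → PowerSeries ℂ)
    (θ : PowerSeries ℂ) : Prop :=
  γ ≠ 0 ∧ (∀ i, PowerSeries.constantCoeff (γ i) = 0) ∧
    PowerSeries.constantCoeff θ = 0 ∧ PowerSeries.coeff 1 θ ≠ 0 ∧
    ∀ i, substCurve γ (F (X i)) = substPS θ (γ i)


private lemma eq_single_of_sum_eq_one {n : ℕ} (e : Fin n →₀ ℕ) (h : ∑ j, e j = 1) :
    ∃ j, e = Finsupp.single j 1 := by
  have h0 : ∑ j, e j ≠ 0 := by omega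
  obtain ⟨j, -, hj⟩ := Finset.exists_ne_zero_of_sum_ne_zero h0
  refine ⟨j, ?_⟩
  have hsplit : ∑ k ∈ Finset.univ.erase j, e k + e j = 1 := by
    rw [Finset.sum_erase_add _ _ (Finset.mem_univ j)]; exact h
  have hje : e j = 1 := by omega
  have hrest : ∑ k ∈ Finset.univ.erase j, e k = 0 := by omega
  ext k
  rcases eq_or_ne k j with rfl | hk
  · simp [hje]
  · have hk0 : e k = 0 := (Finset.sum_eq_zero_iff).mp hrest k (by simp [hk])
    simp [Finsupp.single_apply, hk0, (Ne.symm hk)]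

private lemma ord_pow {φ : PowerSeries ℂ} {m : ℕ} (h : (m : ℕ∞) ≤ φ.order) (k : ℕ) :
    ((k * m : ℕ) : ℕ∞) ≤ (φ ^ k).order := by
  induction k with
  | zero => simp
  | succ k ih =>
    rw [pow_succ]
    refine le_trans ?_ (PowerSeries.le_order_mul _ _)
    have : ((k + 1) * m : ℕ) = (k * m : ℕ) + m := by ring
    rw [this, Nat.cast_add]
    exact add_le_add ih h

private lemma ord_prod {n ν : ℕ} (γ : Fin n → PowerSeries ℂ)
    (hγ : ∀ j, (ν : ℕ∞) ≤ (γ j).order) (e : Fin n → ℕ) (s : Finset (Fin n)) :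
    ((∑ j ∈ s, e j * ν : ℕ) : ℕ∞) ≤ (∏ j ∈ s, γ j ^ e j).order := by
  classical
  induction s using Finset.induction with
  | empty => simp
  | insert _ _ hns ih =>
    rw [Finset.prod_insert hns, Finset.sum_insert hns, Nat.cast_add]
    exact le_trans (add_le_add (ord_pow (hγ _) _) ih) (PowerSeries.le_order_mul _ _)

/-- If `Γ` (parametrized by `γ`, with `F∘γ = γ∘θ`) is a formal invariant curve
of `F` of multiplicity `ν`, then the tangent direction `v = (coeff ν (γ i))ᵢ` of `Γ` is an
eigenvector of `D₀F` with eigenvalue `(θ'(0))^ν`, i.e. `(λ_Γ)^ν = λ(Γ)`. -/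
theorem inner_pow_mult_eq_tangent {n : ℕ} (F : FormalDiffeo n)
    (γ : Fin n → PowerSeries ℂ) (θ : PowerSeries ℂ)
    (hinv : IsInvariantCurve F γ θ) (ν : ℕ) (hν : 0 < ν)
    (hlow : ∀ i, ∀ m < ν, PowerSeries.coeff m (γ i) = 0)
    (hne : ∃ i, PowerSeries.coeff ν (γ i) ≠ 0) :
    Matrix.mulVec (linPartD F) (fun i => PowerSeries.coeff ν (γ i)) =
      ((PowerSeries.coeff 1 θ) ^ ν) • (fun i => PowerSeries.coeff ν (γ i)) := by
  classical
  obtain ⟨-, hγ0, hθ0, hθ1, heq⟩ := hinv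
  set c : ℂ := PowerSeries.coeff 1 θ with hc
  -- θ = X * ψ
  obtain ⟨ψ, hψ⟩ := PowerSeries.X_dvd_iff.mpr hθ0
  have hcψ : PowerSeries.constantCoeff ψ = c := by
    have h1 : PowerSeries.coeff (0 + 1) ((PowerSeries.X : PowerSeries ℂ) ^ 1 * ψ) =
        PowerSeries.coeff 0 ψ := PowerSeries.coeff_X_pow_mul ψ 1 0
    simp only [pow_one, zero_add, PowerSeries.coeff_zero_eq_constantCoeff] at h1
    rw [hc, hψ, h1]
  have hθpow : PowerSeries.coeff ν (θ ^ ν) = c ^ ν := by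
    rw [hψ, mul_pow]
    have h1 : PowerSeries.coeff (0 + ν) ((PowerSeries.X : PowerSeries ℂ) ^ ν * ψ ^ ν) =
        PowerSeries.coeff 0 (ψ ^ ν) := PowerSeries.coeff_X_pow_mul (ψ ^ ν) ν 0
    simp only [zero_add, PowerSeries.coeff_zero_eq_constantCoeff, map_pow] at h1
    rw [h1, hcψ]
  -- order bounds
  have hγord : ∀ j, (ν : ℕ∞) ≤ (γ j).order := fun j =>
    PowerSeries.nat_le_order _ _ (fun m hm => hlow j m hm)
  have hθord : (1 : ℕ∞) ≤ θ.order := by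
    have := PowerSeries.nat_le_order θ 1 (fun m hm => by
      interval_cases m
      simpa [PowerSeries.coeff_zero_eq_constantCoeff] using hθ0)
    simpa using this
  -- RHS coefficient
  have hRHS : ∀ i, PowerSeries.coeff ν (substPS θ (γ i)) =
      PowerSeries.coeff ν (γ i) * c ^ ν := by
    intro i
    rw [substPS, PowerSeries.coeff_mk]
    rw [tsum_eq_single ν ?_]
    · rw [hθpow]
    · intro e he
      rcases lt_or_gt_of_ne he with h | h
      · rw [hlow i e h, zero_mul]
      · have hord : ((e * 1 : ℕ) : ℕ∞) ≤ (θ ^ e).order := ord_pow hθord e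
        have : (ν : ℕ∞) < (θ ^ e).order :=
          lt_of_lt_of_le (by exact_mod_cast (by omega : ν < e * 1)) hord
        rw [PowerSeries.coeff_of_lt_order ν this, mul_zero]
  -- LHS coefficient
  have hLHS : ∀ i, PowerSeries.coeff ν (substCurve γ (F (X i))) =
      ∑ j, linPartD F i j * PowerSeries.coeff ν (γ j) := by
    intro i
    rw [substCurve, PowerSeries.coeff_mk]
    set f : (Fin n →₀ ℕ) → ℂ := fun e =>
      coeff e (F (X i)) * PowerSeries.coeff ν (∏ j, (γ j) ^ (e j)) with hf
    have hinj : Function.Injective (fun j : Fin n => Finsupp.single j (1 : ℕ)) := by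
      intro a b hab
      simpa using (Finsupp.single_left_inj (one_ne_zero)).mp hab
    have hzero : ∀ e ∉ Finset.univ.image (fun j : Fin n => Finsupp.single j (1 : ℕ)),
        f e = 0 := by
      intro e hes
      rcases Nat.lt_or_ge (∑ j, e j) 2 with hS | hS
      · interval_cases hS1 : (∑ j, e j)
        · -- sum = 0 : e = 0, product = 1, coeff ν 1 = 0
          have he0 : ∀ j, e j = 0 := fun j =>
            (Finset.sum_eq_zero_iff).mp hS1 j (Finset.mem_univ j)
          have : (∏ j, (γ j) ^ (e j)) = 1 := by
            rw [Finset.prod_eq_one]; intro j _; rw [he0 j, pow_zero]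
          rw [hf]; simp only [this]
          rw [PowerSeries.coeff_one, if_neg (by omega), mul_zero]
        · -- sum = 1 : e is a single, contradiction
          obtain ⟨j, rfl⟩ := eq_single_of_sum_eq_one e hS1
          exact absurd (Finset.mem_image_of_mem _ (Finset.mem_univ j)) hes
      · -- sum ≥ 2 : high order
        have hord := ord_prod γ hγord (fun j => e j) Finset.univ
        have hsum : ∑ j, (e j) * ν = (∑ j, e j) * ν := by
          rw [Finset.sum_mul]
        have hlt : (ν : ℕ∞) < (∏ j, (γ j) ^ (e j)).order := by
          refine lt_of_lt_of_le ?_ hord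
          exact_mod_cast (by nlinarith : ν < ∑ j, (e j) * ν)
        rw [hf]; simp only
        rw [PowerSeries.coeff_of_lt_order ν hlt, mul_zero]
    rw [tsum_eq_sum hzero, Finset.sum_image (fun a _ b _ h => hinj h)]
    refine Finset.sum_congr rfl fun j _ => ?_
    have hprod : (∏ k, (γ k) ^ ((Finsupp.single j (1 : ℕ)) k)) = γ j := by
      rw [Finset.prod_eq_single j]
      · simp
      · intro k _ hk
        rw [Finsupp.single_apply, if_neg (Ne.symm hk), pow_zero]
      · intro h; exact absurd (Finset.mem_univ j) h
    rw [hf]; simp only [hprod]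
    rfl
  funext i
  have := congrArg (PowerSeries.coeff ν) (heq i)
  rw [hLHS i, hRHS i] at this
  simp only [Matrix.mulVec, dotProduct, Pi.smul_apply, smul_eq_mul]
  rw [this, mul_comm]

end
end

section
/- Let λ_1,...,λ_n be nonzero complex numbers, S = {(m_1,...,m_n) ∈ Z^n : λ_1^{m_1}···λ_n^{m_n} = 1}, and S' = {(m_1,...,m_n) ∈ Z^n : λ_1^{m_1}···λ_n^{m_n} is a root of unity}. Then S' is the intersection of Z^n with the Q-vector space generated by S, S has finite index in S', and the set R = {λ_1^{m_1}···λ_n^{m_n} : (m_1,...,m_n) ∈ S'} is a finite subgroup of the unit circle with |R| = [S' : S]. -/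
open MvPowerSeries

noncomputable section

section ResAux

variable {n : ℕ} {lam : Fin n → ℂ}

private lemma rs_ne (hlam : ∀ i, lam i ≠ 0) (v : Fin n → ℤ) :
    (∏ i, lam i ^ v i) ≠ 0 :=
  Finset.prod_ne_zero_iff.2 fun i _ => zpow_ne_zero _ (hlam i)

private lemma rs_add (hlam : ∀ i, lam i ≠ 0) (v w : Fin n → ℤ) :
    (∏ i, lam i ^ (v + w) i) = (∏ i, lam i ^ v i) * ∏ i, lam i ^ w i := by
  rw [← Finset.prod_mul_distrib]
  exact Finset.prod_congr rfl fun i _ => by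
    simp only [Pi.add_apply]; exact zpow_add₀ (hlam i) _ _

private lemma rs_zero : (∏ i, lam i ^ (0 : Fin n → ℤ) i) = 1 := by simp

private lemma rs_smul (k : ℤ) (v : Fin n → ℤ) :
    (∏ i, lam i ^ (k • v) i) = (∏ i, lam i ^ v i) ^ k := by
  rw [← Finset.prod_zpow]
  exact Finset.prod_congr rfl fun i _ => by
    simp only [Pi.smul_apply, smul_eq_mul]
    rw [mul_comm, zpow_mul]

private lemma rs_neg (hlam : ∀ i, lam i ≠ 0) (v : Fin n → ℤ) :
    (∏ i, lam i ^ (-v) i) = (∏ i, lam i ^ v i)⁻¹ :=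
  eq_inv_of_mul_eq_one_left (by rw [← rs_add hlam, neg_add_cancel, rs_zero])

end ResAux

/-- let `S` be the lattice of resonances of nonzero numbers `λ₁,…,λₙ` and `S'`
the lattice of exponents giving roots of unity.  Then `S'` is the intersection of `ℤⁿ` with
the `ℚ`-span of `S`, `S` has finite index in `S'`, and the image `R` of `S'` under
`v ↦ ∏ λᵢ^{vᵢ}` is a finite subgroup of the unit circle of order `[S' : S]`. -/
theorem resonance_saturation {n : ℕ} (lam : Fin n → ℂ) (hlam : ∀ i, lam i ≠ 0)
    (S S' : AddSubgroup (Fin n → ℤ))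
    (hS : ∀ v : Fin n → ℤ, v ∈ S ↔ ∏ i, lam i ^ v i = 1)
    (hS' : ∀ v : Fin n → ℤ, v ∈ S' ↔ ∃ k : ℕ, 0 < k ∧ (∏ i, lam i ^ v i) ^ k = 1) :
    -- `S'` is the intersection of `ℤⁿ` with the `ℚ`-vector space generated by `S`
    (∀ v : Fin n → ℤ, v ∈ S' ↔
      (fun i => (v i : ℚ)) ∈
        Submodule.span ℚ ((fun (w : Fin n → ℤ) => fun i => (w i : ℚ)) '' (S : Set (Fin n → ℤ)))) ∧
    -- `S` is a finite index subgroup of `S'`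
    S ≤ S' ∧ S.relIndex S' ≠ 0 ∧
    -- `R = {∏ λᵢ^{vᵢ} : v ∈ S'}` is a finite subgroup of the unit circle ...
    (1 : ℂ) ∈ {z : ℂ | ∃ v ∈ S', z = ∏ i, lam i ^ v i} ∧
    (∀ a ∈ {z : ℂ | ∃ v ∈ S', z = ∏ i, lam i ^ v i},
      ∀ b ∈ {z : ℂ | ∃ v ∈ S', z = ∏ i, lam i ^ v i},
        a * b ∈ {z : ℂ | ∃ v ∈ S', z = ∏ i, lam i ^ v i}) ∧
    (∀ a ∈ {z : ℂ | ∃ v ∈ S', z = ∏ i, lam i ^ v i},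
      a⁻¹ ∈ {z : ℂ | ∃ v ∈ S', z = ∏ i, lam i ^ v i}) ∧
    (∀ a ∈ {z : ℂ | ∃ v ∈ S', z = ∏ i, lam i ^ v i}, ‖a‖ = 1) ∧
    ({z : ℂ | ∃ v ∈ S', z = ∏ i, lam i ^ v i}).Finite ∧
    -- ... and `|R| = [S' : S]`
    Nat.card {z : ℂ | ∃ v ∈ S', z = ∏ i, lam i ^ v i} = S.relIndex S' := by
  classical
  -- S ≤ S'
  have hSle : S ≤ S' := fun v hv =>
    (hS' v).2 ⟨1, one_pos, by rw [pow_one]; exact (hS v).1 hv⟩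
  -- a uniform exponent N killing all of S'
  obtain ⟨N, hNpos, hNall⟩ :
      ∃ N : ℕ, 0 < N ∧ ∀ v ∈ S', (∏ i, lam i ^ v i) ^ N = 1 := by
    obtain ⟨T, hT⟩ := IsNoetherian.noetherian (AddSubgroup.toIntSubmodule S')
    have hTmem : ∀ t ∈ T, t ∈ S' := fun t ht => by
      have h := hT ▸ Submodule.subset_span (R := ℤ) ht
      exact h
    have hex : ∀ t : {x // x ∈ T}, ∃ k : ℕ, 0 < k ∧ (∏ i, lam i ^ (t : Fin n → ℤ) i) ^ k = 1 :=
      fun t => (hS' t).1 (hTmem t t.2)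
    choose k hkpos hkone using hex
    refine ⟨∏ t ∈ T.attach, k t, Finset.prod_pos fun t _ => hkpos t, ?_⟩
    have hKt : ∀ t ∈ T, (∏ i, lam i ^ t i) ^ (∏ t ∈ T.attach, k t) = 1 := by
      intro t ht
      obtain ⟨m, hm⟩ := Finset.dvd_prod_of_mem k (Finset.mem_attach T ⟨t, ht⟩)
      rw [hm, pow_mul, hkone ⟨t, ht⟩, one_pow]
    set N := ∏ t ∈ T.attach, k t with hN
    let K : AddSubgroup (Fin n → ℤ) :=
      { carrier := {v | (∏ i, lam i ^ v i) ^ N = 1}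
        add_mem' := by
          intro a b ha hb
          simp only [Set.mem_setOf_eq] at ha hb ⊢
          rw [rs_add hlam, mul_pow, ha, hb, one_mul]
        zero_mem' := by
          simp only [Set.mem_setOf_eq, rs_zero, one_pow]
        neg_mem' := by
          intro a ha
          simp only [Set.mem_setOf_eq] at ha ⊢
          rw [rs_neg hlam, inv_pow, ha, inv_one] }
    intro v hv
    have hle : AddSubgroup.toIntSubmodule S' ≤ AddSubgroup.toIntSubmodule K := by
      rw [← hT]
      exact Submodule.span_le.2 fun t ht => hKt t ht
    exact hle hv
  -- basic facts about R
  have h1R : (1 : ℂ) ∈ {z : ℂ | ∃ v ∈ S', z = ∏ i, lam i ^ v i} :=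
    ⟨0, S'.zero_mem, rs_zero.symm⟩
  have hmulR : ∀ a ∈ {z : ℂ | ∃ v ∈ S', z = ∏ i, lam i ^ v i},
      ∀ b ∈ {z : ℂ | ∃ v ∈ S', z = ∏ i, lam i ^ v i},
      a * b ∈ {z : ℂ | ∃ v ∈ S', z = ∏ i, lam i ^ v i} := by
    rintro a ⟨v, hv, rfl⟩ b ⟨w, hw, rfl⟩
    exact ⟨v + w, S'.add_mem hv hw, (rs_add hlam v w).symm⟩
  have hinvR : ∀ a ∈ {z : ℂ | ∃ v ∈ S', z = ∏ i, lam i ^ v i},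
      a⁻¹ ∈ {z : ℂ | ∃ v ∈ S', z = ∏ i, lam i ^ v i} := by
    rintro a ⟨v, hv, rfl⟩
    exact ⟨-v, S'.neg_mem hv, (rs_neg hlam v).symm⟩
  have hnormR : ∀ a ∈ {z : ℂ | ∃ v ∈ S', z = ∏ i, lam i ^ v i}, ‖a‖ = 1 := by
    rintro a ⟨v, hv, rfl⟩
    exact Complex.norm_eq_one_of_pow_eq_one (hNall v hv) hNpos.ne'
  have hfinR : ({z : ℂ | ∃ v ∈ S', z = ∏ i, lam i ^ v i}).Finite := by
    refine Set.Finite.subset (Polynomial.nthRootsFinset N (1 : ℂ)).finite_toSet ?_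
    rintro a ⟨v, hv, rfl⟩
    exact (Polynomial.mem_nthRootsFinset hNpos (1 : ℂ)).2 (hNall v hv)
  -- the bijection between R and S'/S
  have hcard : Nat.card {z : ℂ | ∃ v ∈ S', z = ∏ i, lam i ^ v i} = S.relIndex S' := by
    let g : S' → {z : ℂ | ∃ v ∈ S', z = ∏ i, lam i ^ v i} :=
      fun v => ⟨∏ i, lam i ^ (v : Fin n → ℤ) i, v, v.2, rfl⟩
    have hgrel : ∀ a b : S', (QuotientAddGroup.leftRel (S.addSubgroupOf S')) a b → g a = g b := by
      intro a b hab
      have h1 : ((-a + b : S') : Fin n → ℤ) ∈ S :=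
        (AddSubgroup.mem_addSubgroupOf).1 (QuotientAddGroup.leftRel_apply.1 hab)
      have h2 : (∏ i, lam i ^ ((-a + b : S') : Fin n → ℤ) i) = 1 := (hS _).1 h1
      apply Subtype.ext
      have hco : (a : Fin n → ℤ) + ((-a + b : S') : Fin n → ℤ) = (b : Fin n → ℤ) := by
        push_cast
        abel
      have h3 := rs_add hlam (a : Fin n → ℤ) ((-a + b : S') : Fin n → ℤ)
      rw [hco, h2, mul_one] at h3
      exact h3.symm
    let q : (S' ⧸ S.addSubgroupOf S') → {z : ℂ | ∃ v ∈ S', z = ∏ i, lam i ^ v i} :=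
      Quotient.lift g hgrel
    have hbij : Function.Bijective q := by
      constructor
      · intro x y
        refine Quotient.inductionOn₂ x y ?_
        intro a b hab
        have hval : (∏ i, lam i ^ (a : Fin n → ℤ) i) = ∏ i, lam i ^ (b : Fin n → ℤ) i :=
          congrArg Subtype.val hab
        refine Quotient.sound (QuotientAddGroup.leftRel_apply.2 ?_)
        refine (AddSubgroup.mem_addSubgroupOf).2 ((hS _).2 ?_)
        have : ((-a + b : S') : Fin n → ℤ) = -(a : Fin n → ℤ) + (b : Fin n → ℤ) := by push_cast; ring
        rw [this]
        have hadd : (∏ i, lam i ^ (-(a : Fin n → ℤ) + (b : Fin n → ℤ)) i)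
            = (∏ i, lam i ^ (-(a : Fin n → ℤ)) i) * ∏ i, lam i ^ (b : Fin n → ℤ) i := by
          rw [← rs_add hlam]
        rw [hadd, rs_neg hlam, ← hval, inv_mul_cancel₀ (rs_ne hlam _)]
      · rintro ⟨z, v, hv, rfl⟩
        exact ⟨Quotient.mk _ (⟨v, hv⟩ : S'), rfl⟩
    have := Nat.card_eq_of_bijective q hbij
    rw [← this]
    rfl
  have hrelne : S.relIndex S' ≠ 0 := by
    rw [← hcard]
    have hne : ({z : ℂ | ∃ v ∈ S', z = ∏ i, lam i ^ v i}).Nonempty := ⟨1, h1R⟩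
    haveI := hfinR.to_subtype
    haveI := hne.to_subtype
    exact Nat.card_pos.ne'
  -- the span characterization
  have hspan : ∀ v : Fin n → ℤ, v ∈ S' ↔
      (fun i => (v i : ℚ)) ∈
        Submodule.span ℚ ((fun (w : Fin n → ℤ) => fun i => (w i : ℚ)) '' (S : Set (Fin n → ℤ))) := by
    intro v
    constructor
    · intro hv
      obtain ⟨k, hk, hpow⟩ := (hS' v).1 hv
      have hmem : (k : ℤ) • v ∈ S := by
        refine (hS _).2 ?_
        rw [rs_smul, zpow_natCast, hpow]
      have heq : (fun i => (v i : ℚ)) =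
          ((k : ℚ))⁻¹ • fun i => ((((k : ℤ) • v) i : ℤ) : ℚ) := by
        funext i
        have hk0 : (k : ℚ) ≠ 0 := Nat.cast_ne_zero.2 hk.ne'
        simp only [Pi.smul_apply, smul_eq_mul, Pi.smul_apply, smul_eq_mul]
        push_cast
        field_simp
      rw [heq]
      exact Submodule.smul_mem _ _ (Submodule.subset_span ⟨(k : ℤ) • v, hmem, rfl⟩)
    · intro hv
      have key : ∀ (x : Fin n → ℚ),
          x ∈ Submodule.span ℚ ((fun (w : Fin n → ℤ) => fun i => (w i : ℚ)) '' (S : Set (Fin n → ℤ))) →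
          ∃ k : ℤ, 0 < k ∧ ∃ w ∈ S, (fun i => ((w i : ℤ) : ℚ)) = (k : ℚ) • x := by
        intro x hx
        induction hx using Submodule.span_induction with
        | mem x hx =>
          obtain ⟨w, hw, rfl⟩ := hx
          exact ⟨1, one_pos, w, hw, by funext i; simp⟩
        | zero =>
          exact ⟨1, one_pos, 0, S.zero_mem, by funext i; simp⟩
        | add x y hx hy ihx ihy =>
          obtain ⟨k, hk, w1, hw1, h1⟩ := ihx
          obtain ⟨l, hl, w2, hw2, h2⟩ := ihy
          refine ⟨k * l, mul_pos hk hl, l • w1 + k • w2,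
            S.add_mem (S.zsmul_mem hw1 l) (S.zsmul_mem hw2 k), ?_⟩
          funext i
          have h1i : ((w1 i : ℤ) : ℚ) = (k : ℚ) * x i := by
            have := congrFun h1 i; simpa using this
          have h2i : ((w2 i : ℤ) : ℚ) = (l : ℚ) * y i := by
            have := congrFun h2 i; simpa using this
          simp only [Pi.add_apply, Pi.smul_apply, smul_eq_mul]
          push_cast
          rw [h1i, h2i]
          push_cast
          ring
        | smul a x hx ihx =>
          obtain ⟨k, hk, w, hw, h1⟩ := ihx
          refine ⟨k * a.den, mul_pos hk (by exact_mod_cast a.pos), a.num • w,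
            S.zsmul_mem hw a.num, ?_⟩
          funext i
          have h1i : ((w i : ℤ) : ℚ) = (k : ℚ) * x i := by
            have := congrFun h1 i; simpa using this
          have hden : (a.den : ℚ) * a = (a.num : ℚ) := by
            have h := Rat.num_div_den a
            have hd : (a.den : ℚ) ≠ 0 := Nat.cast_ne_zero.2 a.den_nz
            rw [div_eq_iff hd] at h
            rw [h]; ring
          simp only [Pi.smul_apply, smul_eq_mul]
          push_cast
          rw [h1i]
          calc (a.num : ℚ) * ((k : ℚ) * x i)
              = ((a.den : ℚ) * a) * ((k : ℚ) * x i) := by rw [hden]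
            _ = ((k : ℚ) * (a.den : ℚ)) * (a * x i) := by ring
      obtain ⟨k, hk, w, hw, hcw⟩ := key _ hv
      have hwv : w = k • v := by
        funext i
        have := congrFun hcw i
        simp only [Pi.smul_apply, smul_eq_mul] at this ⊢
        exact_mod_cast this
      have hprod : (∏ i, lam i ^ v i) ^ k = 1 := by
        rw [← rs_smul, ← hwv]
        exact (hS w).1 hw
      refine (hS' v).2 ⟨k.toNat, Int.lt_toNat.2 (by exact_mod_cast hk), ?_⟩
      have h2 : (∏ i, lam i ^ v i) ^ ((k.toNat : ℕ) : ℤ) = 1 := by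
        rw [Int.toNat_of_nonneg hk.le]; exact hprod
      exact_mod_cast h2
  exact ⟨hspan, hSle, hrelne, h1R, hmulR, hinvR, hnormR, hfinR, hcard⟩

end
end

section
/- Let F ∈ Diff(C^n,0) with index of embeddability m. Then every eigenvalue of D_0(F^m) that is a root of unity is equal to 1. -/
open MvPowerSeries

noncomputable section

/-! ### Auxiliary lemmas -/

section Aux

variable {n : ℕ}

lemma aux_add_eq_single {a b : Fin n →₀ ℕ} {j : Fin n}
    (h : a + b = Finsupp.single j 1) : a = 0 ∨ b = 0 := by
  have key : ∀ i : Fin n, a i + b i = Finsupp.single j 1 i := fun i => by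
    rw [← Finsupp.add_apply, h]
  rcases Nat.eq_zero_or_pos (a j) with hz | hp
  · left
    ext i
    simp only [Finsupp.coe_zero, Pi.zero_apply]
    rcases eq_or_ne i j with h | h
    · rw [h]; exact hz
    · have hi := key i
      rw [Finsupp.single_apply, if_neg (fun hh => h hh.symm)] at hi
      omega
  · right
    ext i
    simp only [Finsupp.coe_zero, Pi.zero_apply]
    rcases eq_or_ne i j with h | h
    · have hj := key j
      rw [Finsupp.single_eq_same] at hj
      rw [h]; omega
    · have hi := key i
      rw [Finsupp.single_apply, if_neg (fun hh => h hh.symm)] at hi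
      omega

lemma aux_coeff_single_mul_zero {u v : PS n}
    (hu : constantCoeff u = 0) (hv : constantCoeff v = 0) (j : Fin n) :
    coeff (Finsupp.single j 1) (u * v) = 0 := by
  rw [MvPowerSeries.coeff_mul]
  refine Finset.sum_eq_zero fun p hp => ?_
  rw [Finset.HasAntidiagonal.mem_antidiagonal] at hp
  rcases aux_add_eq_single hp with h | h
  · rw [h, MvPowerSeries.coeff_zero_eq_constantCoeff, hu, zero_mul]
  · rw [h, MvPowerSeries.coeff_zero_eq_constantCoeff, hv, mul_zero]

lemma aux_constantCoeff_map_zero (F : FormalDiffeo n) {g : PS n}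
    (hg : constantCoeff g = 0) : constantCoeff (F g) = 0 := by
  by_contra h
  have hunit : IsUnit (F g) :=
    MvPowerSeries.isUnit_iff_constantCoeff.mpr (isUnit_iff_ne_zero.mpr h)
  have hg' : IsUnit g := by
    have := hunit.map F.symm
    simpa using this
  have := MvPowerSeries.isUnit_constantCoeff g hg'
  rw [hg] at this
  exact not_isUnit_zero this

/-- An automorphism maps a series of order ≥ 2 to a series of order ≥ 2 (we only need
vanishing of the linear coefficients of the image). -/
lemma aux_coeff_single_map_zero (F : FormalDiffeo n) {g : PS n}
    (h0 : constantCoeff g = 0)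
    (h1 : ∀ l, coeff (Finsupp.single l 1) g = 0) (j : Fin n) :
    coeff (Finsupp.single j 1) (F g) = 0 := by
  classical
  -- decompose `g = ∑ l, X l * gl l` with each `gl l` of positive order
  set gl : Fin n → PS n := fun l => fun e =>
    if ∀ l' : Fin n, l' < l → e l' = 0 then g (e + Finsupp.single l 1) else 0 with hgl
  have hgl_eval : ∀ (l : Fin n) (e : Fin n →₀ ℕ), coeff e (gl l) =
      if ∀ l' : Fin n, l' < l → e l' = 0 then
        coeff (e + Finsupp.single l 1) g else 0 := fun l e => rfl
  have hglconst : ∀ l, constantCoeff (gl l) = 0 := by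
    intro l
    rw [← MvPowerSeries.coeff_zero_eq_constantCoeff_apply, hgl_eval,
      if_pos (show ∀ l' : Fin n, l' < l → (0 : Fin n →₀ ℕ) l' = 0 by simp), zero_add]
    exact h1 l
  have hdecomp : g = ∑ l : Fin n, X l * gl l := by
    apply MvPowerSeries.ext
    intro d
    rw [map_sum]
    have hterm : ∀ l : Fin n, coeff d (X l * gl l) =
        if (d l ≠ 0 ∧ ∀ l' : Fin n, l' < l → d l' = 0) then g d else 0 := by
      intro l
      rw [MvPowerSeries.coeff_mul]
      rcases Nat.eq_zero_or_pos (d l) with hdl | hdl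
      · rw [if_neg (by simp [hdl])]
        refine Finset.sum_eq_zero fun p hp => ?_
        rw [Finset.HasAntidiagonal.mem_antidiagonal] at hp
        rw [MvPowerSeries.coeff_X]
        rcases eq_or_ne p.1 (Finsupp.single l 1) with h1' | h1'
        · exfalso
          have := DFunLike.congr_fun hp l
          rw [Finsupp.add_apply, h1', Finsupp.single_eq_same] at this
          omega
        · rw [if_neg h1', zero_mul]
      · have hle : Finsupp.single l 1 ≤ d := by
          intro i
          rcases eq_or_ne i l with rfl | hil
          · simpa using Nat.one_le_iff_ne_zero.mpr hdl.ne'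
          · rw [Finsupp.single_apply, if_neg (show ¬ l = i from fun hh => hil hh.symm)]
            exact Nat.zero_le _
        have hsum : ∑ p ∈ Finset.HasAntidiagonal.antidiagonal d, coeff p.1 (X l : PS n) * coeff p.2 (gl l)
            = coeff (d - Finsupp.single l 1) (gl l) := by
          rw [Finset.sum_eq_single (Finsupp.single l 1, d - Finsupp.single l 1)]
          · rw [MvPowerSeries.coeff_X, if_pos rfl, one_mul]
          · intro p hp hne
            rw [Finset.HasAntidiagonal.mem_antidiagonal] at hp
            rw [MvPowerSeries.coeff_X]
            rcases eq_or_ne p.1 (Finsupp.single l 1) with h1' | h1'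
            · exfalso
              apply hne
              have h2' : p.2 = d - Finsupp.single l 1 := by
                rw [← hp, h1']
                ext i
                rw [Finsupp.tsub_apply, Finsupp.add_apply]
                omega
              exact Prod.ext h1' h2' 
            · rw [if_neg h1', zero_mul]
          · intro hnotmem
            exfalso
            apply hnotmem
            rw [Finset.HasAntidiagonal.mem_antidiagonal]
            show Finsupp.single l 1 + (d - Finsupp.single l 1) = d
            ext i
            rw [Finsupp.add_apply, Finsupp.tsub_apply]
            have := hle i
            omega
        rw [hsum, hgl_eval]
        have hback : (d - Finsupp.single l 1) + Finsupp.single l 1 = d := by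
          ext i
          rw [Finsupp.add_apply, Finsupp.tsub_apply]
          have := hle i
          omega
        have hcond_iff : (∀ l' : Fin n, l' < l → (d - Finsupp.single l 1 : Fin n →₀ ℕ) l' = (0 : ℕ)) ↔
            (∀ l' : Fin n, l' < l → d l' = 0) := by
          constructor
          · intro hc l' hl'
            have h := hc l' hl'
            rwa [Finsupp.tsub_apply, Finsupp.single_apply, if_neg (ne_of_gt hl'),
              Nat.sub_zero] at h
          · intro hc l' hl'
            rw [Finsupp.tsub_apply, Finsupp.single_apply, if_neg (ne_of_gt hl'),
              Nat.sub_zero]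
            exact hc l' hl' 
        by_cases hcond : ∀ l' : Fin n, l' < l → d l' = 0
        · rw [if_pos (hcond_iff.mpr hcond), hback, if_pos ⟨by omega, hcond⟩]
          rfl
        · rw [if_neg (fun hc => hcond (hcond_iff.mp hc)), if_neg (by tauto)]
    rw [Finset.sum_congr rfl (fun l _ => hterm l)]
    rcases eq_or_ne d 0 with rfl | hd
    · rw [MvPowerSeries.coeff_zero_eq_constantCoeff_apply, h0]
      refine (Finset.sum_eq_zero fun l _ => ?_).symm
      rw [if_neg]
      simp
    · -- d ≠ 0 : exactly one l (the minimal element of the support) contributes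
      have hsupp : d.support.Nonempty := Finsupp.support_nonempty_iff.mpr hd
      set l₀ := d.support.min' hsupp with hl₀
      have hmem : l₀ ∈ d.support := d.support.min'_mem hsupp
      have hdl₀ : d l₀ ≠ 0 := Finsupp.mem_support_iff.mp hmem
      have hcondl₀ : d l₀ ≠ 0 ∧ ∀ l' : Fin n, l' < l₀ → d l' = 0 := by
        refine ⟨hdl₀, fun l' hl' => ?_⟩
        by_contra hne
        have hmem' : l' ∈ d.support := Finsupp.mem_support_iff.mpr hne
        exact absurd (d.support.min'_le l' hmem') (not_le.mpr hl')
      rw [Finset.sum_eq_single l₀]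
      · rw [if_pos hcondl₀]
        rfl
      · intro l _ hne
        rw [if_neg]
        rintro ⟨hdl, hbelow⟩
        rcases lt_or_ge l₀ l with hlt | hge
        · exact hdl₀ (hbelow l₀ hlt)
        · have hmem' : l ∈ d.support := Finsupp.mem_support_iff.mpr hdl
          have h1' := d.support.min'_le l hmem'
          exact hne (le_antisymm hge h1')
      · intro h
        exact absurd (Finset.mem_univ l₀) h
  -- now use the decomposition
  rw [hdecomp, map_sum, map_sum]
  refine Finset.sum_eq_zero fun l _ => ?_
  rw [map_mul]
  refine aux_coeff_single_mul_zero ?_ ?_ j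
  · exact aux_constantCoeff_map_zero F (by simp [MvPowerSeries.constantCoeff_X])
  · exact aux_constantCoeff_map_zero F (hglconst l)

/-- Composition formula for linear parts (coefficient form). -/
lemma aux_comp_coeff (G H : FormalDiffeo n) (i j : Fin n) :
    coeff (Finsupp.single j 1) (G (H (X i))) =
      ∑ l : Fin n, coeff (Finsupp.single l 1) (H (X i)) *
        coeff (Finsupp.single j 1) (G (X l)) := by
  classical
  have hhc : constantCoeff (H (X i)) = 0 :=
    aux_constantCoeff_map_zero H (by simp [MvPowerSeries.constantCoeff_X])
  have hcoeffX : ∀ (l l' : Fin n), coeff (Finsupp.single l' 1) (X l : PS n)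
      = if l = l' then 1 else 0 := by
    intro l l'
    rw [MvPowerSeries.coeff_X]
    rcases eq_or_ne l l' with rfl | hne
    · simp
    · rw [if_neg, if_neg hne]
      intro hh'
      rcases (Finsupp.single_eq_single_iff _ _ _ _).mp hh' with ⟨h1', _⟩ | ⟨h1', _⟩
      · exact hne h1'.symm
      · exact one_ne_zero h1'
  have hsplit : H (X i) =
      (∑ l : Fin n, (coeff (Finsupp.single l 1) (H (X i))) • X l) +
        (H (X i) - ∑ l : Fin n, (coeff (Finsupp.single l 1) (H (X i))) • X l) := by
    ring
  have hR0 : constantCoeff (H (X i) -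
      ∑ l : Fin n, (coeff (Finsupp.single l 1) (H (X i))) • X l) = 0 := by
    rw [← MvPowerSeries.coeff_zero_eq_constantCoeff_apply, map_sub, map_sum]
    simp [map_smul, MvPowerSeries.coeff_zero_eq_constantCoeff_apply,
      MvPowerSeries.constantCoeff_X, hhc]
  have hR1 : ∀ l', coeff (Finsupp.single l' 1) (H (X i) -
      ∑ l : Fin n, (coeff (Finsupp.single l 1) (H (X i))) • X l) = 0 := by
    intro l'
    rw [map_sub, map_sum]
    have hterm : ∀ l : Fin n,
        coeff (Finsupp.single l' 1) ((coeff (Finsupp.single l 1) (H (X i))) • X l)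
        = if l = l' then coeff (Finsupp.single l' 1) (H (X i)) else 0 := by
      intro l
      rw [map_smul, hcoeffX]
      rcases eq_or_ne l l' with rfl | hne
      · simp
      · simp [hne]
    rw [Finset.sum_congr rfl fun l _ => hterm l, Finset.sum_ite_eq' Finset.univ l'
      (fun _ => coeff (Finsupp.single l' 1) (H (X i)))]
    simp
  conv_lhs => rw [hsplit]
  rw [map_add, map_add, map_sum, map_sum,
    aux_coeff_single_map_zero G hR0 hR1 j, add_zero]
  refine Finset.sum_congr rfl fun l _ => ?_
  rw [map_smul, map_smul, smul_eq_mul]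

/-- Linear part of a composition: `linPartD (G * H) = linPartD H * linPartD G`. -/
lemma aux_linPartD_mul (G H : FormalDiffeo n) :
    linPartD (G * H) = linPartD H * linPartD G := by
  ext i j
  have hGH : (G * H) (X i) = G (H (X i)) := rfl
  rw [Matrix.mul_apply]
  simpa [linPartD] using aux_comp_coeff G H i j

lemma aux_linPartD_one : linPartD (1 : FormalDiffeo n) = 1 := by
  ext i j
  have h1 : (1 : FormalDiffeo n) (X i) = X i := rfl
  rw [linPartD, Matrix.of_apply, h1, MvPowerSeries.coeff_X, Matrix.one_apply]
  rcases eq_or_ne i j with rfl | hne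
  · simp
  · rw [if_neg, if_neg hne]
    intro hh'
    rcases (Finsupp.single_eq_single_iff _ _ _ _).mp hh' with ⟨h1', _⟩ | ⟨h1', _⟩
    · exact hne h1'.symm
    · exact one_ne_zero h1'

/-- Behaviour of linear parts of powers on an eigenvector. -/
lemma aux_linPartD_pow_mulVec (G : FormalDiffeo n) (v : Fin n → ℂ) (c : ℂ)
    (hv : (linPartD G).mulVec v = c • v) (j : ℕ) :
    (linPartD (G ^ j)).mulVec v = c ^ j • v := by
  induction j with
  | zero => simp [aux_linPartD_one]
  | succ j ih =>
    rw [pow_succ, aux_linPartD_mul, ← Matrix.mulVec_mulVec, ih]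
    rw [Matrix.mulVec_smul, hv, smul_smul, pow_succ]

lemma aux_linPartD_pow (G : FormalDiffeo n) (j : ℕ) :
    linPartD (G ^ j) = (linPartD G) ^ j := by
  induction j with
  | zero => simpa using aux_linPartD_one
  | succ j ih => rw [pow_succ, aux_linPartD_mul, ih, ← pow_succ']

lemma aux_charpoly_eval (M : Matrix (Fin n) (Fin n) ℂ) (μ : ℂ) :
    M.charpoly.eval μ = (μ • (1 : Matrix (Fin n) (Fin n) ℂ) - M).det := by
  rw [Matrix.charpoly, ← Polynomial.coe_evalRingHom, RingHom.map_det]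
  congr 1
  ext i j
  rcases eq_or_ne i j with rfl | hne
  · simp [Matrix.charmatrix_apply_eq]
  · simp [Matrix.charmatrix_apply_ne _ _ _ hne, Matrix.one_apply_ne hne]

end Aux

/-- if `m` is the index of embeddability of `F`, then every eigenvalue of
`D₀(F^m)` which is a root of unity equals `1`. -/
theorem eigenvalue_root_of_unity_eq_one {n : ℕ} (F : FormalDiffeo n) (m : ℕ) (hm : 0 < m)
    (hmem : F ^ m ∈ proAlgIdComp (Subgroup.zpowers F : Set (FormalDiffeo n)))
    (hmin : ∀ k : ℕ, 0 < k →
      F ^ k ∈ proAlgIdComp (Subgroup.zpowers F : Set (FormalDiffeo n)) → m ≤ k) :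
    ∀ μ ∈ (linPartD (F ^ m)).charpoly.roots, (∃ k : ℕ, 0 < k ∧ μ ^ k = 1) → μ = 1 := by
  classical
  intro μ hμroots hex
  obtain ⟨k, hk, hμk⟩ := hex
  by_contra hne
  -- μ is in the spectrum of (linPartD F) ^ m
  have hroot : (((linPartD F) ^ m).charpoly).IsRoot μ := by
    rw [← aux_linPartD_pow F m]
    exact (Polynomial.mem_roots'.mp hμroots).2
  have hdet : (μ • (1 : Matrix (Fin n) (Fin n) ℂ) - (linPartD F) ^ m).det = 0 := by
    rw [← aux_charpoly_eval]; exact hroot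
  have hspecm : μ ∈ spectrum ℂ ((linPartD F) ^ m) := by
    rw [spectrum.mem_iff]
    intro hunit
    rw [Algebra.algebraMap_eq_smul_one] at hunit
    have h2 := (Matrix.isUnit_iff_isUnit_det _).mp hunit
    rw [hdet] at h2
    exact not_isUnit_zero h2
  rw [spectrum.map_pow_of_pos (𝕜 := ℂ) (linPartD F) hm] at hspecm
  obtain ⟨lam, hlam, hlamμ'⟩ := hspecm
  have hlamμ : lam ^ m = μ := hlamμ'
  -- an eigenvector for lam
  have hdetlam : (lam • (1 : Matrix (Fin n) (Fin n) ℂ) - linPartD F).det = 0 := by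
    rw [spectrum.mem_iff] at hlam
    by_contra hdz
    apply hlam
    rw [Algebra.algebraMap_eq_smul_one]
    exact (Matrix.isUnit_iff_isUnit_det _).mpr (isUnit_iff_ne_zero.mpr hdz)
  obtain ⟨v, hvne, hveq⟩ := Matrix.exists_mulVec_eq_zero_iff.mpr hdetlam
  have hAv : (linPartD F).mulVec v = lam • v := by
    rw [Matrix.sub_mulVec, Matrix.smul_mulVec, Matrix.one_mulVec, sub_eq_zero] at hveq
    exact hveq.symm
  set r := m * k with hr
  have hrne : r ≠ 0 := (Nat.mul_pos hm hk).ne'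
  have hlamr : lam ^ r = 1 := by rw [hr, pow_mul, hlamμ, hμk]
  have hlamne : lam ≠ 0 := by
    intro h0; rw [h0, zero_pow hrne] at hlamr; exact zero_ne_one hlamr
  -- the inverse acts by lam⁻¹ on v
  have hBAone : linPartD F⁻¹ * linPartD F = 1 := by
    have h3 := aux_linPartD_mul F F⁻¹
    rw [mul_inv_cancel, aux_linPartD_one] at h3
    exact h3.symm
  have hBv : (linPartD F⁻¹).mulVec v = lam⁻¹ • v := by
    have h2 : (linPartD F⁻¹ * linPartD F).mulVec v = v := by
      rw [hBAone, Matrix.one_mulVec]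
    rw [← Matrix.mulVec_mulVec, hAv, Matrix.mulVec_smul] at h2
    calc (linPartD F⁻¹).mulVec v
        = lam⁻¹ • (lam • (linPartD F⁻¹).mulVec v) := by
          rw [smul_smul, inv_mul_cancel₀ hlamne, one_smul]
      _ = lam⁻¹ • v := by rw [h2]
  -- a coordinate where v does not vanish
  obtain ⟨i₀, hvi₀⟩ := Function.ne_iff.mp hvne
  have hvi : v i₀ ≠ 0 := by simpa using hvi₀
  -- the linear functional χ on the jet space
  have hd1 : ∀ l : Fin n, ((Finsupp.single l 1).sum fun _ e => e) ≤ 1 := by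
    intro l
    rw [Finsupp.sum_single_index rfl]
  set dc : Fin n → {d : Fin n →₀ ℕ // (d.sum fun _ e => e) ≤ 1} :=
    fun l => ⟨Finsupp.single l 1, hd1 l⟩ with hdc
  set χ : JetSpace n 1 → ℂ :=
    fun J => (∑ l : Fin n, J i₀ (dc l) * v l) * (v i₀)⁻¹ with hχ
  have hχdef : ∀ J : JetSpace n 1,
      χ J = (∑ l : Fin n, J i₀ (dc l) * v l) * (v i₀)⁻¹ := fun _ => rfl
  have hχjet : ∀ (G : FormalDiffeo n) (c : ℂ), (linPartD G).mulVec v = c • v →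
      χ (jetOf n 1 G) = c := by
    intro G c hGc
    rw [hχdef]
    have h1 : ((linPartD G).mulVec v) i₀ = ∑ l : Fin n, linPartD G i₀ l * v l := by
      simp [Matrix.mulVec, dotProduct]
    have h3 : (∑ l : Fin n, jetOf n 1 G i₀ (dc l) * v l) = ((linPartD G).mulVec v) i₀ := by
      rw [h1]
      exact Finset.sum_congr rfl fun l _ => by
        rw [show jetOf n 1 G i₀ (dc l) = linPartD G i₀ l from rfl]
    rw [h3, hGc, Pi.smul_apply, smul_eq_mul, mul_assoc, mul_inv_cancel₀ hvi, mul_one]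
  have hχmem : χ ∈ polyFuns n 1 := by
    have hrepr : χ = ∑ l : Fin n, (v l * (v i₀)⁻¹) • (fun J : JetSpace n 1 => J i₀ (dc l)) := by
      funext J
      rw [hχdef J, Finset.sum_apply, Finset.sum_mul]
      refine Finset.sum_congr rfl fun l _ => ?_
      simp only [Pi.smul_apply, smul_eq_mul]
      ring
    rw [hrepr]
    exact Subalgebra.sum_mem _ fun l _ => Subalgebra.smul_mem _
      (Algebra.subset_adjoin (show (fun J : JetSpace n 1 => J i₀ (dc l)) ∈
        {φ : JetSpace n 1 → ℂ | ∃ i d, φ = fun J => J i d} from ⟨i₀, dc l, rfl⟩)) _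
  -- now the topological argument at jet level 1
  letI : TopologicalSpace (JetSpace n 1) := zTop n 1
  have hmem1 : jetOf n 1 (F ^ m) ∈
      connectedComponentIn
        (closure (jetOf n 1 '' (Subgroup.zpowers F : Set (FormalDiffeo n)))) (jetOf n 1 1) :=
    hmem 1
  have hopen : ∀ φ ∈ polyFuns n 1, IsOpen {x : JetSpace n 1 | φ x ≠ 0} := by
    intro φ hφ
    have h : @IsOpen _ (TopologicalSpace.generateFrom
        {U : Set (JetSpace n 1) | ∃ ψ ∈ polyFuns n 1, U = {x | ψ x ≠ 0}})
        {x : JetSpace n 1 | φ x ≠ 0} :=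
      TopologicalSpace.isOpen_generateFrom_of_mem ⟨φ, hφ, rfl⟩
    exact h
  have hφZ : (χ ^ r - 1 : JetSpace n 1 → ℂ) ∈ polyFuns n 1 :=
    sub_mem (pow_mem hχmem r) (one_mem _)
  have hZopen : IsOpen {x : JetSpace n 1 | χ x ^ r - 1 ≠ 0} := by
    have h := hopen _ hφZ
    have hseteq : {x : JetSpace n 1 | (χ ^ r - 1 : JetSpace n 1 → ℂ) x ≠ 0}
        = {x : JetSpace n 1 | χ x ^ r - 1 ≠ 0} := by
      ext x
      simp [Pi.sub_apply, Pi.pow_apply, Pi.one_apply]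
    rwa [hseteq] at h
  have hZclosed : IsClosed {x : JetSpace n 1 | χ x ^ r = 1} := by
    have hseteq : {x : JetSpace n 1 | χ x ^ r = 1}
        = {x : JetSpace n 1 | χ x ^ r - 1 ≠ 0}ᶜ := by
      ext x
      simp [sub_eq_zero]
    rw [hseteq]
    exact hZopen.isClosed_compl
  have hDZ : jetOf n 1 '' (Subgroup.zpowers F : Set (FormalDiffeo n))
      ⊆ {x : JetSpace n 1 | χ x ^ r = 1} := by
    rintro x ⟨G, hG, rfl⟩
    obtain ⟨z, hz⟩ := Subgroup.mem_zpowers_iff.mp hG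
    show χ (jetOf n 1 G) ^ r = 1
    rcases z with j | j
    · rw [Int.ofNat_eq_coe, zpow_natCast] at hz
      have hval := hχjet G (lam ^ j)
        (by rw [← hz]; exact aux_linPartD_pow_mulVec F v lam hAv j)
      rw [hval, ← pow_mul, mul_comm j r, pow_mul, hlamr, one_pow]
    · rw [zpow_negSucc] at hz
      have hGinv : (F⁻¹) ^ (j + 1) = G := by rw [inv_pow]; exact hz
      have hval := hχjet G (lam⁻¹ ^ (j + 1))
        (by rw [← hGinv]; exact aux_linPartD_pow_mulVec F⁻¹ v lam⁻¹ hBv (j + 1))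
      rw [hval, ← pow_mul, mul_comm (j + 1) r, pow_mul, inv_pow, hlamr, inv_one, one_pow]
  have hSZ : closure (jetOf n 1 '' (Subgroup.zpowers F : Set (FormalDiffeo n)))
      ⊆ {x : JetSpace n 1 | χ x ^ r = 1} := closure_minimal hDZ hZclosed
  have h1S : jetOf n 1 (1 : FormalDiffeo n) ∈
      closure (jetOf n 1 '' (Subgroup.zpowers F : Set (FormalDiffeo n))) :=
    subset_closure ⟨1, SetLike.mem_coe.mpr (one_mem _), rfl⟩
  have hC1 : jetOf n 1 (1 : FormalDiffeo n) ∈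
      connectedComponentIn
        (closure (jetOf n 1 '' (Subgroup.zpowers F : Set (FormalDiffeo n)))) (jetOf n 1 1) :=
    mem_connectedComponentIn h1S
  have hCpre : IsPreconnected
      (connectedComponentIn
        (closure (jetOf n 1 '' (Subgroup.zpowers F : Set (FormalDiffeo n)))) (jetOf n 1 1)) :=
    isPreconnected_connectedComponentIn
  have hCS := connectedComponentIn_subset
    (closure (jetOf n 1 '' (Subgroup.zpowers F : Set (FormalDiffeo n)))) (jetOf n 1 1)
  -- values of χ at the two distinguished jets
  have hχ1 : χ (jetOf n 1 (1 : FormalDiffeo n)) = 1 :=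
    hχjet 1 1 (by rw [aux_linPartD_one, Matrix.one_mulVec, one_smul])
  have hχFm : χ (jetOf n 1 (F ^ m)) = μ := by
    have := hχjet (F ^ m) (lam ^ m) (aux_linPartD_pow_mulVec F v lam hAv m)
    rw [this, hlamμ]
  -- the two open sets
  have hφu : (∑ t ∈ Finset.range r, χ ^ t : JetSpace n 1 → ℂ) ∈ polyFuns n 1 :=
    Subalgebra.sum_mem _ fun t _ => pow_mem hχmem t
  have huopen : IsOpen {x : JetSpace n 1 | (∑ t ∈ Finset.range r, χ x ^ t) ≠ 0} := by
    have h := hopen _ hφu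
    have hseteq : {x : JetSpace n 1 | (∑ t ∈ Finset.range r, χ ^ t : JetSpace n 1 → ℂ) x ≠ 0}
        = {x : JetSpace n 1 | (∑ t ∈ Finset.range r, χ x ^ t) ≠ 0} := by
      ext x
      simp [Finset.sum_apply, Pi.pow_apply]
    rwa [hseteq] at h
  have hφv : (χ - 1 : JetSpace n 1 → ℂ) ∈ polyFuns n 1 := sub_mem hχmem (one_mem _)
  have hvopen : IsOpen {x : JetSpace n 1 | χ x - 1 ≠ 0} := by
    have h := hopen _ hφv
    have hseteq : {x : JetSpace n 1 | (χ - 1 : JetSpace n 1 → ℂ) x ≠ 0}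
        = {x : JetSpace n 1 | χ x - 1 ≠ 0} := by
      ext x
      simp [Pi.sub_apply, Pi.one_apply]
    rwa [hseteq] at h
  -- the connected component is covered by the two open sets
  have hcover : connectedComponentIn
      (closure (jetOf n 1 '' (Subgroup.zpowers F : Set (FormalDiffeo n)))) (jetOf n 1 1)
      ⊆ {x : JetSpace n 1 | (∑ t ∈ Finset.range r, χ x ^ t) ≠ 0}
        ∪ {x : JetSpace n 1 | χ x - 1 ≠ 0} := by
    intro x _
    by_cases hx1 : χ x = 1
    · left
      show (∑ t ∈ Finset.range r, χ x ^ t) ≠ 0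
      rw [hx1]
      simp only [one_pow, Finset.sum_const, Finset.card_range, nsmul_eq_mul, mul_one]
      exact_mod_cast hrne
    · right
      exact sub_ne_zero.mpr hx1
  have hune : (connectedComponentIn
      (closure (jetOf n 1 '' (Subgroup.zpowers F : Set (FormalDiffeo n)))) (jetOf n 1 1)
      ∩ {x : JetSpace n 1 | (∑ t ∈ Finset.range r, χ x ^ t) ≠ 0}).Nonempty := by
    refine ⟨jetOf n 1 1, hC1, ?_⟩
    show (∑ t ∈ Finset.range r, χ (jetOf n 1 1) ^ t) ≠ 0
    rw [hχ1]
    simp only [one_pow, Finset.sum_const, Finset.card_range, nsmul_eq_mul, mul_one]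
    exact_mod_cast hrne
  have hvne' : (connectedComponentIn
      (closure (jetOf n 1 '' (Subgroup.zpowers F : Set (FormalDiffeo n)))) (jetOf n 1 1)
      ∩ {x : JetSpace n 1 | χ x - 1 ≠ 0}).Nonempty := by
    refine ⟨jetOf n 1 (F ^ m), hmem1, ?_⟩
    show χ (jetOf n 1 (F ^ m)) - 1 ≠ 0
    rw [hχFm]
    exact sub_ne_zero.mpr hne
  obtain ⟨x, hxC, hxu, hxv⟩ := hCpre _ _ huopen hvopen hcover hune hvne'
  have hxZ : χ x ^ r = 1 := hSZ (hCS hxC)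
  have hgeom : (∑ t ∈ Finset.range r, χ x ^ t) * (χ x - 1) = χ x ^ r - 1 := geom_sum_mul (χ x) r
  have : (∑ t ∈ Finset.range r, χ x ^ t) * (χ x - 1) = 0 := by
    rw [hgeom, hxZ, sub_self]
  exact mul_ne_zero hxu hxv this

end
end

section
/- Let I be an ideal of the ring C[[x_1,...,x_n]] of formal power series. Then the set I_I = {F formal diffeomorphism of (C^n,0) : I∘F ⊆ I} is a pro-algebraic subgroup of the group of formal diffeomorphisms, and moreover I_I = {F : I∘F = I}. -/
open MvPowerSeries

noncomputable section

namespace Stab13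
open scoped Classical

/-- total degree of an exponent -/
abbrev deg {n : ℕ} (d : Fin n →₀ ℕ) : ℕ := d.sum fun _ e => e

lemma deg_add {n : ℕ} (a b : Fin n →₀ ℕ) : deg (a + b) = deg a + deg b := by
  apply Finsupp.sum_add_index <;> simp

lemma deg_eq_zero {n : ℕ} {d : Fin n →₀ ℕ} (h : deg d = 0) : d = 0 := by
  ext i
  by_cases hi : i ∈ d.support
  · exact absurd (Finset.sum_eq_zero_iff.mp h i hi) (Finsupp.mem_support_iff.mp hi)
  · simpa using Finsupp.notMem_support_iff.mp hi

lemma apply_le_deg {n : ℕ} (d : Fin n →₀ ℕ) (i : Fin n) : d i ≤ deg d := by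
  by_cases hi : i ∈ d.support
  · exact Finset.single_le_sum (f := fun j => d j) (fun _ _ => Nat.zero_le _) hi
  · simp [Finsupp.notMem_support_iff.mp hi]

/-- the ideal of power series with vanishing coefficients in degrees `≤ k` -/
def Vk (n k : ℕ) : Ideal (PS n) where
  carrier := {f | ∀ d : Fin n →₀ ℕ, deg d ≤ k → coeff d f = 0}
  add_mem' := by intro a b ha hb d hd; simp [ha d hd, hb d hd]
  zero_mem' := by intro d hd; simp
  smul_mem' := by
    intro c f hf d hd
    rw [smul_eq_mul, coeff_mul]
    apply Finset.sum_eq_zero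
    intro p hp
    have h2 : deg p.2 ≤ k := by
      have := Finset.HasAntidiagonal.mem_antidiagonal.mp hp
      have : deg p.1 + deg p.2 = deg d := by rw [← deg_add, this]
      omega
    simp [hf p.2 h2]

lemma mem_Vk {n k : ℕ} {f : PS n} : f ∈ Vk n k ↔ ∀ d : Fin n →₀ ℕ, deg d ≤ k → coeff d f = 0 :=
  Iff.rfl

lemma Vk_antitone {n k l : ℕ} (h : k ≤ l) : Vk n l ≤ Vk n k := by
  intro f hf d hd; exact hf d (hd.trans h)

lemma mul_mem_Vk {n a b : ℕ} {f g : PS n} (hf : f ∈ Vk n a) (hg : ∀ d, deg d ≤ b → coeff d g = 0) :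
    f * g ∈ Vk n (a + b + 1) := by
  intro d hd
  rw [coeff_mul]
  apply Finset.sum_eq_zero
  intro p hp
  have hsum : deg p.1 + deg p.2 = deg d := by
    rw [← deg_add, Finset.HasAntidiagonal.mem_antidiagonal.mp hp]
  by_cases h1 : deg p.1 ≤ a
  · simp [hf p.1 h1]
  · have : deg p.2 ≤ b := by omega
    simp [hg p.2 this]

/-- the maximal ideal -/
def mI (n : ℕ) : Ideal (PS n) := Ideal.span (Set.range (X : Fin n → PS n))

/-- decomposition of a power series with zero constant term -/
lemma exists_decomp {n : ℕ} (f : PS n) (h0 : constantCoeff f = 0) :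
    ∃ h : Fin n → PS n, f = ∑ i, X i * h i ∧
      ∀ j, f ∈ Vk n (j + 1) → ∀ i, h i ∈ Vk n j := by
  classical
  set hh : Fin n → PS n := fun i d => if ∀ l, l < i → d l = 0 then
      coeff (d + Finsupp.single i 1) f else 0 with hhdef
  have hhc : ∀ (i : Fin n) (d : Fin n →₀ ℕ), coeff d (hh i) = if ∀ l, l < i → d l = 0 then
      coeff (d + Finsupp.single i 1) f else 0 := fun i d => rfl
  have hX : ∀ (i : Fin n) (h : PS n) (d : Fin n →₀ ℕ),
      coeff d (X i * h) = if Finsupp.single i 1 ≤ d then coeff (d - Finsupp.single i 1) h else 0 := by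
    intro i h d
    rw [X, coeff_monomial_mul]
    split <;> simp
  refine ⟨hh, ?_, ?_⟩
  · ext d
    rw [map_sum]
    by_cases hd : d = 0
    · subst hd
      have hz : ∀ i ∈ Finset.univ, coeff (0 : Fin n →₀ ℕ) (X i * hh i) = 0 := by
        intro i _
        rw [hX]
        have : ¬ Finsupp.single i 1 ≤ 0 := by
          simp [Finsupp.single_le_iff]
        simp [this]
      rw [Finset.sum_eq_zero hz]
      simpa using h0
    · have hsupp : d.support.Nonempty := by
        rw [Finsupp.support_nonempty_iff]; exact hd
      set i0 := d.support.min' hsupp with hi0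
      have hi0mem : i0 ∈ d.support := d.support.min'_mem hsupp
      have hi0pos : d i0 ≠ 0 := Finsupp.mem_support_iff.mp hi0mem
      rw [Finset.sum_eq_single i0]
      · rw [hX, if_pos (by rwa [Finsupp.single_le_iff, Nat.one_le_iff_ne_zero]), hhc]
        have hcond : ∀ l, l < i0 → ((d - Finsupp.single i0 1 : Fin n →₀ ℕ)) l = 0 := by
          intro l hl
          have hdl : d l = 0 := by
            by_contra hne
            exact absurd (d.support.min'_le l (Finsupp.mem_support_iff.mpr hne)) (not_le.mpr hl)
          simp [Finsupp.tsub_apply, hdl]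
        rw [if_pos hcond]
        congr 1
        rw [tsub_add_cancel_of_le (by rwa [Finsupp.single_le_iff, Nat.one_le_iff_ne_zero])]
      · intro j _ hj
        rw [hX]
        by_cases hle : Finsupp.single j 1 ≤ d
        · rw [if_pos hle, hhc]
          have hjmem : j ∈ d.support := by
            rw [Finsupp.mem_support_iff]
            have := (Finsupp.single_le_iff).mp hle
            omega
          have hij : i0 < j := lt_of_le_of_ne (d.support.min'_le j hjmem) (Ne.symm hj)
          have : ¬ (∀ l, l < j → ((d - Finsupp.single j 1 : Fin n →₀ ℕ)) l = 0) := by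
            intro hc
            have := hc i0 hij
            rw [Finsupp.tsub_apply, Finsupp.single_apply, if_neg (by omega)] at this
            omega
          rw [if_neg this]
        · rw [if_neg hle]
      · intro hmem
        exact absurd (Finset.mem_univ i0) hmem
  · intro j hf i d hd
    rw [hhc]
    by_cases hc : ∀ l, l < i → d l = 0
    · rw [if_pos hc]
      apply hf
      rw [deg_add]
      have : deg (Finsupp.single i 1) = 1 := by
        simp [deg, Finsupp.sum_single_index]
      omega
    · rw [if_neg hc]

lemma constantCoeff_eq_zero_of_mem_Vk {n k : ℕ} {f : PS n} (hf : f ∈ Vk n k) :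
    constantCoeff f = 0 := by
  have := hf 0 (by simp [deg])
  simpa using this

lemma Vk_le_pow {n : ℕ} : ∀ k, Vk n k ≤ mI n ^ (k + 1) := by
  intro k
  induction k with
  | zero =>
    intro f hf
    obtain ⟨h, hfe, -⟩ := exists_decomp f (constantCoeff_eq_zero_of_mem_Vk hf)
    rw [hfe, pow_one]
    exact Ideal.sum_mem _ fun i _ =>
      Ideal.mul_mem_right _ _ (Ideal.subset_span ⟨i, rfl⟩)
  | succ k ih =>
    intro f hf
    obtain ⟨h, hfe, hmem⟩ := exists_decomp f
      (constantCoeff_eq_zero_of_mem_Vk hf)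
    rw [hfe]
    apply Ideal.sum_mem
    intro i _
    have h1 : h i ∈ mI n ^ (k + 1) := ih (hmem k hf i)
    have h2 : (X i : PS n) ∈ mI n := Ideal.subset_span ⟨i, rfl⟩
    rw [pow_succ, mul_comm (X i)]
    exact Ideal.mul_mem_mul h1 h2

lemma X_mem_Vk_zero {n : ℕ} (i : Fin n) : (X i : PS n) ∈ Vk n 0 := by
  intro d hd
  have : d = 0 := deg_eq_zero (Nat.le_zero.mp hd)
  subst this
  rw [MvPowerSeries.coeff_zero_X]

lemma pow_le_Vk {n : ℕ} : ∀ k, mI n ^ (k + 1) ≤ Vk n k := by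
  intro k
  induction k with
  | zero =>
    rw [pow_one, mI, Ideal.span_le]
    rintro - ⟨i, rfl⟩
    exact X_mem_Vk_zero i
  | succ k ih =>
    rw [pow_succ]
    apply Ideal.mul_le.mpr
    intro f hf g hg
    have hg0 : ∀ d, deg d ≤ 0 → coeff d g = 0 := by
      intro d hd
      have : d = 0 := deg_eq_zero (Nat.le_zero.mp hd)
      subst this
      have : constantCoeff g = 0 := by
        have : g ∈ Vk n 0 := by
          have h1 : mI n ≤ Vk n 0 := by
            rw [mI, Ideal.span_le]
            rintro - ⟨i, rfl⟩
            exact X_mem_Vk_zero i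
          exact h1 hg
        exact constantCoeff_eq_zero_of_mem_Vk this
      simpa using this
    have := mul_mem_Vk (ih hf) hg0
    simpa using this

lemma Vk_eq_pow {n k : ℕ} : Vk n k = mI n ^ (k + 1) :=
  le_antisymm (Vk_le_pow k) (pow_le_Vk k)

/-- every algebra automorphism preserves `Vk` -/
lemma aut_maps_Vk {n k : ℕ} (F : FormalDiffeo n) {f : PS n} (hf : f ∈ Vk n k) :
    F f ∈ Vk n k := by
  have hXF : ∀ i : Fin n, F (X i) ∈ mI n := by
    intro i
    apply Vk_le_pow 0 |>.trans_eq (pow_one _) |> fun h => h ?_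
    intro d hd
    have : d = 0 := deg_eq_zero (Nat.le_zero.mp hd)
    subst this
    -- constant coeff of F (X i) is zero since F (X i) is not a unit
    by_contra hne
    have hunit : IsUnit (F (X i)) := by
      rw [MvPowerSeries.isUnit_iff_constantCoeff]
      simp only [← MvPowerSeries.coeff_zero_eq_constantCoeff_apply]
      exact isUnit_iff_ne_zero.mpr hne
    have : IsUnit (X i : PS n) := by
      have := hunit.map F.symm
      simpa using this
    rw [MvPowerSeries.isUnit_iff_constantCoeff] at this
    simp at this
  have hmap : Ideal.map (F : PS n →+* PS n) (mI n) ≤ mI n := by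
    rw [mI, Ideal.map_span]
    rw [Ideal.span_le]
    rintro - ⟨-, ⟨i, rfl⟩, rfl⟩
    exact hXF i
  have : F f ∈ Ideal.map (F : PS n →+* PS n) (mI n ^ (k + 1)) :=
    Ideal.mem_map_of_mem _ (Vk_le_pow k hf)
  rw [Ideal.map_pow] at this
  have : F f ∈ mI n ^ (k + 1) := Ideal.pow_right_mono hmap (k+1) this
  exact pow_le_Vk k this

/-! ### order and initial form -/

/-- the order (smallest total degree of a nonzero coefficient) of a power series -/
def ordd {n : ℕ} (g : PS n) : ℕ := sInf {k | ∃ e, deg e = k ∧ coeff e g ≠ 0}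

lemma ordd_le {n : ℕ} {g : PS n} {e : Fin n →₀ ℕ} (h : coeff e g ≠ 0) : ordd g ≤ deg e :=
  Nat.sInf_le ⟨e, rfl, h⟩

lemma exists_ordd {n : ℕ} {g : PS n} (h : g ≠ 0) :
    ∃ e, deg e = ordd g ∧ coeff e g ≠ 0 := by
  have hne : {k | ∃ e, deg e = k ∧ coeff e g ≠ 0}.Nonempty := by
    obtain ⟨e, he⟩ : ∃ e, coeff e g ≠ 0 := by
      by_contra hc
      push_neg at hc
      exact h (MvPowerSeries.ext fun e => by simpa using hc e)
    exact ⟨deg e, e, rfl, he⟩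
  exact Nat.sInf_mem hne

lemma ordd_eq_of {n : ℕ} {g : PS n} {d : ℕ} (h1 : ∀ e, deg e < d → coeff e g = 0)
    (h2 : ∃ e, deg e = d ∧ coeff e g ≠ 0) : ordd g = d := by
  obtain ⟨e, hed, hec⟩ := h2
  have hg0 : g ≠ 0 := by
    intro h0
    subst h0
    simp at hec
  refine le_antisymm (hed ▸ ordd_le hec) ?_
  by_contra hc
  push_neg at hc
  obtain ⟨e', he', hc'⟩ := exists_ordd hg0
  exact hc' (h1 e' (by omega))

/-- the finset of exponents of total degree `d` -/
def Ed (n d : ℕ) : Finset (Fin n →₀ ℕ) :=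
  (Finset.Iic (Finsupp.equivFunOnFinite.symm fun _ => d)).filter (fun e => deg e = d)

lemma mem_Ed {n d : ℕ} {e : Fin n →₀ ℕ} : e ∈ Ed n d ↔ deg e = d := by
  constructor
  · intro h
    exact (Finset.mem_filter.mp h).2
  · intro h
    refine Finset.mem_filter.mpr ⟨Finset.mem_Iic.mpr ?_, h⟩
    intro i
    have := apply_le_deg e i
    simp only [Finsupp.equivFunOnFinite_symm_apply_apply]
    omega

/-- the initial form of a power series, as a polynomial -/
def inP {n : ℕ} (g : PS n) : MvPolynomial (Fin n) ℂ :=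
  ∑ e ∈ Ed n (ordd g), MvPolynomial.monomial e (coeff e g)

lemma coeff_inP {n : ℕ} (g : PS n) (e : Fin n →₀ ℕ) :
    MvPolynomial.coeff e (inP g) = if deg e = ordd g then coeff e g else 0 := by
  classical
  rw [inP]
  by_cases h : deg e = ordd g
  · rw [MvPolynomial.coeff_sum, Finset.sum_eq_single e]
    · simp [MvPolynomial.coeff_monomial, h]
    · intro b _ hb
      rw [MvPolynomial.coeff_monomial, if_neg hb]
    · intro hne
      exact absurd (mem_Ed.mpr h) hne
  · rw [if_neg h, MvPolynomial.coeff_sum]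
    apply Finset.sum_eq_zero
    intro b hb
    have hbe : b ≠ e := by
      intro hc
      exact h (hc ▸ mem_Ed.mp hb)
    rw [MvPolynomial.coeff_monomial, if_neg hbe]

/-! ### division by initial forms: ideals are closed in the adic topology -/

section Division

variable {n : ℕ} (I : Ideal (PS n)) {ι : Type} [Fintype ι] (w : ι → PS n)

/-- invariant of the division algorithm -/
def Pinv (d : ℕ) (r : PS n) : Prop :=
  (∀ k, r ∈ I ⊔ Vk n k) ∧ (∀ e : Fin n →₀ ℕ, deg e < d → coeff e r = 0)

lemma step (hwI : ∀ i, w i ∈ I)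
    (hS : ∀ g ∈ I, g ≠ 0 → inP g ∈ Ideal.span (Set.range fun i : ι => inP (w i)))
    (d : ℕ) (r : PS n) (hr : Pinv I d r) :
    ∃ c : ι → PS n, (∀ i e, coeff e (c i) ≠ 0 → ordd (w i) ≤ d ∧ deg e = d - ordd (w i)) ∧
      Pinv I (d + 1) (r - ∑ i, c i * w i) := by
  classical
  by_cases hcase : ∀ e : Fin n →₀ ℕ, deg e = d → coeff e r = 0
  · refine ⟨0, fun i e hce => absurd (by simp) hce, ?_, ?_⟩
    · intro k
      simpa using hr.1 k
    · intro e he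
      have h1 : deg e < d ∨ deg e = d := by omega
      rcases h1 with h1 | h1
      · simpa using hr.2 e h1
      · simpa using hcase e h1
  · push_neg at hcase
    obtain ⟨e₀, he₀d, he₀⟩ := hcase
    obtain ⟨a, haI, v, hv, hav⟩ := Submodule.mem_sup.mp (hr.1 d)
    have hca : ∀ e : Fin n →₀ ℕ, deg e ≤ d → coeff e a = coeff e r := by
      intro e he
      rw [← hav, map_add, hv e he, add_zero]
    have ha0 : a ≠ 0 := by
      intro h0
      apply he₀
      rw [← hca e₀ he₀d.le, h0, map_zero]
    have horda : ordd a = d := by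
      apply ordd_eq_of
      · intro e he
        rw [hca e (by omega)]
        exact hr.2 e he
      · exact ⟨e₀, he₀d, by rw [hca e₀ he₀d.le]; exact he₀⟩
    obtain ⟨h, hsum⟩ := (Ideal.mem_span_range_iff_exists_fun).mp (hS a haI ha0)
    set c : ι → PS n := fun i => fun e => if ordd (w i) ≤ d ∧ deg e = d - ordd (w i)
      then MvPolynomial.coeff e (h i) else 0 with hcdef
    have hc : ∀ (i : ι) (e : Fin n →₀ ℕ), coeff e (c i) =
        if ordd (w i) ≤ d ∧ deg e = d - ordd (w i) then MvPolynomial.coeff e (h i) else 0 :=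
      fun i e => rfl
    have hcw : ∀ i, c i * w i ∈ I := fun i => Ideal.mul_mem_left _ _ (hwI i)
    refine ⟨c, ?_, ?_, ?_⟩
    · intro i e hce
      rw [hc] at hce
      by_contra hcon
      rw [if_neg hcon] at hce
      exact hce rfl
    · intro k
      exact Submodule.sub_mem _ (hr.1 k)
        (Submodule.mem_sup_left (Ideal.sum_mem _ fun i _ => hcw i))
    · intro e he
      rw [map_sub, map_sum]
      have hkey : ∀ (i : ι) (p : (Fin n →₀ ℕ) × (Fin n →₀ ℕ)), p ∈ Finset.HasAntidiagonal.antidiagonal e →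
          coeff p.1 (c i) * coeff p.2 (w i) ≠ 0 →
          deg p.1 + deg p.2 = deg e ∧ ordd (w i) ≤ d ∧ deg p.1 = d - ordd (w i)
            ∧ ordd (w i) ≤ deg p.2 := by
        intro i p hp hne
        have h1 : coeff p.1 (c i) ≠ 0 := left_ne_zero_of_mul hne
        have h2 : coeff p.2 (w i) ≠ 0 := right_ne_zero_of_mul hne
        have h3 := Finset.HasAntidiagonal.mem_antidiagonal.mp hp
        have h4 : deg p.1 + deg p.2 = deg e := by rw [← deg_add, h3]
        have h5 := ordd_le h2
        have h6 : ordd (w i) ≤ d ∧ deg p.1 = d - ordd (w i) := by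
          have := hc i p.1 ▸ h1
          by_contra hcon
          rw [hc, if_neg hcon] at h1
          exact h1 rfl
        exact ⟨h4, h6.1, h6.2, h5⟩
      have h1 : deg e < d ∨ deg e = d := by omega
      rcases h1 with h1 | h1
      · -- all product terms vanish, and r's coefficient vanishes
        rw [hr.2 e h1, Finset.sum_eq_zero, sub_zero]
        intro i _
        rw [coeff_mul]
        apply Finset.sum_eq_zero
        intro p hp
        by_contra hne
        obtain ⟨h4, h6a, h6b, h5⟩ := hkey i p hp hne
        omega
      · -- degree exactly d
        rw [sub_eq_zero]
        have hra : coeff e r = MvPolynomial.coeff e (inP a) := by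
          rw [coeff_inP, horda, if_pos h1, hca e h1.le]
        rw [hra, ← hsum, MvPolynomial.coeff_sum]
        apply Finset.sum_congr rfl
        intro i _
        rw [coeff_mul, MvPolynomial.coeff_mul]
        apply Finset.sum_congr rfl
        intro p hp
        have h3 := Finset.HasAntidiagonal.mem_antidiagonal.mp hp
        have h4 : deg p.1 + deg p.2 = deg e := by rw [← deg_add, h3]
        rw [hc, coeff_inP]
        by_cases h7 : deg p.2 = ordd (w i)
        · have h8 : ordd (w i) ≤ d ∧ deg p.1 = d - ordd (w i) := by omega
          rw [if_pos h8, if_pos h7]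
        · have h8 : ¬ (ordd (w i) ≤ d ∧ deg p.1 = d - ordd (w i)) := by omega
          rw [if_neg h8, if_neg h7, zero_mul, mul_zero]
  
/-- the sequence of remainders of the division algorithm -/
noncomputable def RS (hwI : ∀ i, w i ∈ I)
    (hS : ∀ g ∈ I, g ≠ 0 → inP g ∈ Ideal.span (Set.range fun i : ι => inP (w i)))
    (f : PS n) (hf : ∀ k, f ∈ I ⊔ Vk n k) : ∀ d : ℕ, {r : PS n // Pinv I d r} :=
  fun d => Nat.rec
    (⟨f, hf, fun e he => absurd he (Nat.not_lt_zero _)⟩ : {r : PS n // Pinv I 0 r})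
    (fun d p => ⟨p.1 - ∑ i, Classical.choose (step I w hwI hS d p.1 p.2) i * w i,
      (Classical.choose_spec (step I w hwI hS d p.1 p.2)).2⟩) d

/-- the division algorithm: writing an element of the adic closure of an ideal
as a combination of the chosen elements -/
theorem div_main {n : ℕ} (I : Ideal (PS n)) {ι : Type} [Fintype ι] (w : ι → PS n)
    (hwI : ∀ i, w i ∈ I)
    (hS : ∀ g ∈ I, g ≠ 0 → inP g ∈ Ideal.span (Set.range fun i : ι => inP (w i)))
    (f : PS n) (hf : ∀ k, f ∈ I ⊔ Vk n k) : f ∈ Ideal.span (Set.range w) := by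
  classical
  -- the division algorithm
  set RSf := RS I w hwI hS f hf with hRSdef
  set cc : ℕ → ι → PS n :=
    fun d => Classical.choose (step I w hwI hS d (RSf d).1 (RSf d).2) with hccdef
  have hccspec : ∀ d, (∀ i e, coeff e (cc d i) ≠ 0 →
      ordd (w i) ≤ d ∧ deg e = d - ordd (w i)) ∧
      Pinv I (d + 1) ((RSf d).1 - ∑ i, cc d i * w i) :=
    fun d => Classical.choose_spec (step I w hwI hS d (RSf d).1 (RSf d).2)
  have hrec : ∀ d : ℕ, (RSf (d+1)).1 = (RSf d).1 - ∑ i, cc d i * w i := fun d => rfl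
  have hpart : ∀ D : ℕ, f - (RSf D).1 = ∑ d ∈ Finset.range D, ∑ i, cc d i * w i := by
    intro D
    induction D with
    | zero =>
      rw [Finset.sum_range_zero]
      have h0 : (RSf 0).1 = f := rfl
      rw [h0, sub_self]
    | succ D ih =>
      rw [Finset.sum_range_succ, ← ih, hrec]
      ring
  -- the quotient series
  set q : ι → PS n := fun i => fun e => coeff e (cc (deg e + ordd (w i)) i) with hqdef
  have hq : ∀ i e, coeff e (q i) = coeff e (cc (deg e + ordd (w i)) i) := fun i e => rfl
  have hfq : f = ∑ i, q i * w i := by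
    ext e
    set D := deg e + (Finset.univ.sup fun i : ι => ordd (w i)) + 1 with hD
    have h1 : coeff e f = coeff e (RSf D).1 +
        ∑ d ∈ Finset.range D, ∑ i, coeff e (cc d i * w i) := by
      have := hpart D
      have h2 : f = (RSf D).1 + ∑ d ∈ Finset.range D, ∑ i, cc d i * w i := by
        rw [← this]; ring
      rw [h2, map_add, map_sum]
      congr 1
      apply Finset.sum_congr rfl
      intro d _
      rw [map_sum]
    have h0 : coeff e (RSf D).1 = 0 := (RSf D).2.2 e (by omega)
    rw [h1, h0, zero_add, map_sum, Finset.sum_comm]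
    apply Finset.sum_congr rfl
    intro i _
    rw [coeff_mul]
    simp only [coeff_mul]
    rw [Finset.sum_comm]
    apply Finset.sum_congr rfl
    intro p hp
    rw [← Finset.sum_mul]
    congr 1
    have hdp : deg p.1 + deg p.2 = deg e := by
      rw [← deg_add, Finset.HasAntidiagonal.mem_antidiagonal.mp hp]
    rw [hq]
    apply Finset.sum_eq_single_of_mem
    · apply Finset.mem_range.mpr
      have : ordd (w i) ≤ Finset.univ.sup fun i : ι => ordd (w i) :=
        Finset.le_sup (f := fun i : ι => ordd (w i)) (Finset.mem_univ i)
      omega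
    · intro d _ hd
      by_contra hne
      have := (hccspec d).1 i p.1 hne
      omega
  rw [hfq]
  exact Ideal.sum_mem _ fun i _ =>
    Ideal.mul_mem_left _ _ (Ideal.subset_span ⟨i, rfl⟩)

/-- ideals of the power series ring are closed in the adic topology -/
theorem ideal_closed {n : ℕ} (I : Ideal (PS n)) (f : PS n)
    (hf : ∀ k, f ∈ I ⊔ Vk n k) : f ∈ I := by
  classical
  set S : Set (MvPolynomial (Fin n) ℂ) := {p | ∃ g, g ∈ I ∧ g ≠ 0 ∧ inP g = p} with hSdef
  obtain ⟨G, hG⟩ : (Ideal.span S).FG := IsNoetherian.noetherian _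
  have hmem : ∀ x ∈ G, ∃ T : Finset (MvPolynomial (Fin n) ℂ),
      ↑T ⊆ S ∧ x ∈ Ideal.span (T : Set (MvPolynomial (Fin n) ℂ)) := by
    intro x hx
    have hx2 : x ∈ Ideal.span S := hG ▸ Ideal.subset_span hx
    exact Submodule.mem_span_finite_of_mem_span hx2
  choose T hTsub hTmem using hmem
  set TT : Finset (MvPolynomial (Fin n) ℂ) := G.attach.biUnion (fun x => T x.1 x.2) with hTTdef
  have hTTsub : (TT : Set (MvPolynomial (Fin n) ℂ)) ⊆ S := by
    intro x hx
    obtain ⟨y, -, hy⟩ := Finset.mem_biUnion.mp (Finset.mem_coe.mp hx)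
    exact hTsub _ _ hy
  have hspanTT : Ideal.span S ≤ Ideal.span (TT : Set (MvPolynomial (Fin n) ℂ)) := by
    rw [← hG, Ideal.span_le]
    intro x hx
    refine Ideal.span_mono ?_ (hTmem x hx)
    intro y hy
    exact Finset.mem_coe.mpr (Finset.mem_biUnion.mpr
      ⟨⟨x, hx⟩, Finset.mem_attach _ _, Finset.mem_coe.mp hy⟩)
  have hwit : ∀ t : ↥TT, ∃ g : PS n, g ∈ I ∧ g ≠ 0 ∧ inP g = (t : MvPolynomial (Fin n) ℂ) :=
    fun t => hTTsub t.2
  choose w hwI hw0 hwin using hwit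
  have hrange : (Set.range fun t : ↥TT => inP (w t)) = (TT : Set (MvPolynomial (Fin n) ℂ)) := by
    have : (fun t : ↥TT => inP (w t)) = (fun t : ↥TT => (t : MvPolynomial (Fin n) ℂ)) := by
      funext t
      exact hwin t
    rw [this, Subtype.range_coe_subtype]
    ext y
    simp
  have hS : ∀ g ∈ I, g ≠ 0 → inP g ∈ Ideal.span (Set.range fun t : ↥TT => inP (w t)) := by
    intro g hg hg0
    rw [hrange]
    exact hspanTT (Ideal.subset_span ⟨g, hg, hg0, rfl⟩)
  have := div_main I w hwI hS f hf
  refine Ideal.span_le.mpr ?_ this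
  rintro - ⟨t, rfl⟩
  exact hwI t

/-- the power series ring is Noetherian -/
theorem ps_noetherian (n : ℕ) : IsNoetherianRing (PS n) := by
  classical
  rw [isNoetherianRing_iff_ideal_fg]
  intro I
  set S : Set (MvPolynomial (Fin n) ℂ) := {p | ∃ g, g ∈ I ∧ g ≠ 0 ∧ inP g = p} with hSdef
  obtain ⟨G, hG⟩ : (Ideal.span S).FG := IsNoetherian.noetherian _
  have hmem : ∀ x ∈ G, ∃ T : Finset (MvPolynomial (Fin n) ℂ),
      ↑T ⊆ S ∧ x ∈ Ideal.span (T : Set (MvPolynomial (Fin n) ℂ)) := by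
    intro x hx
    have hx2 : x ∈ Ideal.span S := hG ▸ Ideal.subset_span hx
    exact Submodule.mem_span_finite_of_mem_span hx2
  choose T hTsub hTmem using hmem
  set TT : Finset (MvPolynomial (Fin n) ℂ) := G.attach.biUnion (fun x => T x.1 x.2) with hTTdef
  have hTTsub : (TT : Set (MvPolynomial (Fin n) ℂ)) ⊆ S := by
    intro x hx
    obtain ⟨y, -, hy⟩ := Finset.mem_biUnion.mp (Finset.mem_coe.mp hx)
    exact hTsub _ _ hy
  have hspanTT : Ideal.span S ≤ Ideal.span (TT : Set (MvPolynomial (Fin n) ℂ)) := by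
    rw [← hG, Ideal.span_le]
    intro x hx
    refine Ideal.span_mono ?_ (hTmem x hx)
    intro y hy
    exact Finset.mem_coe.mpr (Finset.mem_biUnion.mpr
      ⟨⟨x, hx⟩, Finset.mem_attach _ _, Finset.mem_coe.mp hy⟩)
  have hwit : ∀ t : ↥TT, ∃ g : PS n, g ∈ I ∧ g ≠ 0 ∧ inP g = (t : MvPolynomial (Fin n) ℂ) :=
    fun t => hTTsub t.2
  choose w hwI hw0 hwin using hwit
  have hrange : (Set.range fun t : ↥TT => inP (w t)) = (TT : Set (MvPolynomial (Fin n) ℂ)) := by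
    have : (fun t : ↥TT => inP (w t)) = (fun t : ↥TT => (t : MvPolynomial (Fin n) ℂ)) := by
      funext t
      exact hwin t
    rw [this, Subtype.range_coe_subtype]
    ext y
    simp
  have hS : ∀ g ∈ I, g ≠ 0 → inP g ∈ Ideal.span (Set.range fun t : ↥TT => inP (w t)) := by
    intro g hg hg0
    rw [hrange]
    exact hspanTT (Ideal.subset_span ⟨g, hg, hg0, rfl⟩)
  have heq : I = Ideal.span (Set.range w) := by
    apply le_antisymm
    · intro f hfI
      exact div_main I w hwI hS f (fun k => Submodule.mem_sup_left hfI)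
    · refine Ideal.span_le.mpr ?_
      rintro - ⟨t, rfl⟩
      exact hwI t
  rw [heq]
  exact Submodule.fg_span (Set.finite_range w)

end Division

/-! ### the stabilizer is a subgroup, and `I ∘ F = I` -/

lemma stab_mem_iff {n : ℕ} (I : Ideal (PS n)) (F : FormalDiffeo n)
    (hF : ∀ g ∈ I, F g ∈ I) : ∀ g : PS n, g ∈ I ↔ F g ∈ I := by
  haveI : IsNoetherianRing (PS n) := ps_noetherian n
  set Fr : PS n →+* PS n := (F : PS n →+* PS n) with hFr
  set Frs : PS n →+* PS n := (F.symm : PS n →+* PS n) with hFrs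
  have hcomp : Fr.comp Frs = RingHom.id (PS n) := by
    ext x
    simp [hFr, hFrs]
  set T : Ideal (PS n) → Ideal (PS n) := fun J => Ideal.comap Fr J with hT
  have hTmono : Monotone T := fun J K h => Ideal.comap_mono h
  have hIT : I ≤ T I := fun g hg => hF g hg
  have hmono : Monotone (fun k => T^[k] I) := by
    apply monotone_nat_of_le_succ
    intro k
    rw [Function.iterate_succ_apply]
    exact Monotone.iterate hTmono k hIT
  obtain ⟨N, hN⟩ := monotone_stabilizes_iff_noetherian.mpr
    (inferInstance : IsNoetherian (PS n) (PS n))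
    ⟨fun k => T^[k] I, hmono⟩
  have hstab : T^[N] I = T^[N] (T I) := by
    have := hN (N+1) (by omega)
    simpa [Function.iterate_succ_apply] using this
  have hTinj : Function.Injective T := by
    have hli : Function.LeftInverse (fun J => Ideal.comap Frs J) T := by
      intro J
      simp only [hT]
      rw [Ideal.comap_comap, hcomp, Ideal.comap_id]
    exact hli.injective
  have hITeq : I = T I := Function.Injective.iterate hTinj N hstab
  intro g
  constructor
  · intro hg
    exact hF g hg
  · intro hg
    have : g ∈ T I := hg
    rw [← hITeq] at this
    exact this

lemma stab_image {n : ℕ} (I : Ideal (PS n)) (F : FormalDiffeo n)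
    (hF : ∀ g ∈ I, F g ∈ I) : (fun g => F g) '' (I : Set (PS n)) = (I : Set (PS n)) := by
  ext h
  constructor
  · rintro ⟨g, hg, rfl⟩
    exact hF g hg
  · intro hh
    refine ⟨F.symm h, ?_, by simp⟩
    have := (stab_mem_iff I F hF (F.symm h))
    rw [SetLike.mem_coe, this]
    simpa using hh


/-! ### jets and polynomial functions -/

/-- the index type of the jet space -/
abbrev Esub (n k : ℕ) := {d : Fin n →₀ ℕ // (d.sum fun _ e => e) ≤ k}

noncomputable instance fintypeEsub (n k : ℕ) : Fintype (Esub n k) := by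
  apply Fintype.ofInjective (β := Fin n → Fin (k+1))
    (f := fun d => fun i => (⟨d.1 i, by
      have h1 := apply_le_deg d.1 i
      have h2 := d.2
      simp only [deg] at h1
      omega⟩ : Fin (k+1)))
  intro a b hab
  apply Subtype.ext
  ext i
  have := congrFun hab i
  simpa using congrArg Fin.val this

/-- the finset of exponents of total degree at most `k` -/
def EdLe (n k : ℕ) : Finset (Fin n →₀ ℕ) :=
  (Finset.Iic (Finsupp.equivFunOnFinite.symm fun _ => k)).filter (fun e => deg e ≤ k)

lemma mem_EdLe {n k : ℕ} {e : Fin n →₀ ℕ} : e ∈ EdLe n k ↔ deg e ≤ k := by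
  constructor
  · intro h
    exact (Finset.mem_filter.mp h).2
  · intro h
    refine Finset.mem_filter.mpr ⟨Finset.mem_Iic.mpr ?_, h⟩
    intro i
    have := apply_le_deg e i
    simp only [Finsupp.equivFunOnFinite_symm_apply_apply]
    omega

lemma prod_X_pow {n : ℕ} (e : Fin n →₀ ℕ) :
    (∏ i, (X i : PS n) ^ (e i)) = monomial e 1 := by
  classical
  have h1 : ∀ i : Fin n, (X i : PS n) ^ (e i) = monomial (Finsupp.single i (e i)) 1 :=
    fun i => X_pow_eq i (e i)
  simp only [h1]
  have key : ∀ s : Finset (Fin n), (∏ i ∈ s, (monomial (Finsupp.single i (e i)) 1 : PS n)) =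
      monomial (∑ i ∈ s, Finsupp.single i (e i)) 1 := by
    intro s
    induction s using Finset.cons_induction with
    | empty => simp
    | cons a s ha ih =>
      rw [Finset.prod_cons, ih, monomial_mul_monomial, one_mul, Finset.sum_cons]
  have hz : ∀ i ∈ Finset.univ, i ∉ e.support → Finsupp.single i (e i) = 0 := by
    intro i _ hi
    rw [Finsupp.notMem_support_iff.mp hi, Finsupp.single_zero]
  have hsum : (∑ i : Fin n, Finsupp.single i (e i)) = e := by
    rw [← Finset.sum_subset (Finset.subset_univ e.support) hz]
    exact Finsupp.sum_single e
  rw [key Finset.univ, hsum]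

/-- the truncated power series associated to a jet -/
def sig {n k : ℕ} (J : JetSpace n k) (i : Fin n) : PS n :=
  fun e => if h : deg e ≤ k then J i ⟨e, h⟩ else 0

lemma coeff_sig {n k : ℕ} (J : JetSpace n k) (i : Fin n) (e : Fin n →₀ ℕ) :
    coeff e (sig J i) = if h : deg e ≤ k then J i ⟨e, h⟩ else 0 := rfl

/-- formal substitution of the jet into a power series, truncated at degree `k` -/
def TJ {n k : ℕ} (J : JetSpace n k) (g : PS n) : PS n :=
  ∑ e ∈ EdLe n k, coeff e g • ∏ i, (sig J i) ^ (e i)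

/-- a family of power series whose coefficients are polynomial functions of the jet -/
def PolyF {n k : ℕ} (φ : (JetSpace n k) → PS n) : Prop :=
  ∀ d : Fin n →₀ ℕ, (fun J => coeff d (φ J)) ∈ polyFuns n k

lemma const_mem_polyFuns {n k : ℕ} (c : ℂ) : (fun _ : JetSpace n k => c) ∈ polyFuns n k := by
  have : (fun _ : JetSpace n k => c) = algebraMap ℂ (JetSpace n k → ℂ) c := rfl
  rw [this]
  exact Subalgebra.algebraMap_mem _ _

lemma polyF_const {n k : ℕ} (c : PS n) : PolyF (n := n) (k := k) (fun _ => c) :=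
  fun d => const_mem_polyFuns _

lemma polyF_sig {n k : ℕ} (i : Fin n) : PolyF (n := n) (k := k) (fun J => sig J i) := by
  intro d
  by_cases h : deg d ≤ k
  · have : (fun J : JetSpace n k => coeff d (sig J i)) = fun J => J i ⟨d, h⟩ := by
      funext J
      rw [coeff_sig, dif_pos h]
    rw [this]
    exact Algebra.subset_adjoin ⟨i, ⟨d, h⟩, rfl⟩
  · have : (fun J : JetSpace n k => coeff d (sig J i)) = fun J => (0 : ℂ) := by
      funext J
      rw [coeff_sig, dif_neg h]
    rw [this]
    exact Subalgebra.zero_mem _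

lemma polyF_mul {n k : ℕ} {φ ψ : (JetSpace n k) → PS n} (hφ : PolyF φ) (hψ : PolyF ψ) :
    PolyF (fun J => φ J * ψ J) := by
  intro d
  have h1 : (fun J => coeff d (φ J * ψ J)) =
      fun J => ∑ p ∈ Finset.HasAntidiagonal.antidiagonal d, coeff p.1 (φ J) * coeff p.2 (ψ J) := by
    funext J
    rw [coeff_mul]
  rw [h1]
  have h2 : (fun J => ∑ p ∈ Finset.HasAntidiagonal.antidiagonal d, coeff p.1 (φ J) * coeff p.2 (ψ J)) =
      ∑ p ∈ Finset.HasAntidiagonal.antidiagonal d, fun J => coeff p.1 (φ J) * coeff p.2 (ψ J) := by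
    funext J
    rw [Finset.sum_apply]
  rw [h2]
  exact Subalgebra.sum_mem _ fun p _ => Subalgebra.mul_mem _ (hφ p.1) (hψ p.2)

lemma polyF_pow {n k : ℕ} {φ : (JetSpace n k) → PS n} (hφ : PolyF φ) (m : ℕ) :
    PolyF (fun J => φ J ^ m) := by
  induction m with
  | zero =>
    simpa using polyF_const (n := n) (k := k) 1
  | succ m ih =>
    have : (fun J => φ J ^ (m+1)) = fun J => (φ J ^ m) * φ J := by
      funext J
      rw [pow_succ]
    rw [this]
    exact polyF_mul ih hφ

lemma polyF_prod {n k : ℕ} {φ : Fin n → (JetSpace n k) → PS n} (hφ : ∀ i, PolyF (φ i))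
    (s : Finset (Fin n)) : PolyF (fun J => ∏ i ∈ s, φ i J) := by
  classical
  induction s using Finset.cons_induction with
  | empty =>
    simpa using polyF_const (n := n) (k := k) 1
  | cons a s ha ih =>
    have : (fun J => ∏ i ∈ Finset.cons a s ha, φ i J) =
        fun J => φ a J * ∏ i ∈ s, φ i J := by
      funext J
      rw [Finset.prod_cons]
    rw [this]
    exact polyF_mul (hφ a) ih

lemma polyF_TJ {n k : ℕ} (g : PS n) : PolyF (n := n) (k := k) (fun J => TJ J g) := by
  intro d
  have h1 : (fun J : JetSpace n k => coeff d (TJ J g)) =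
      ∑ e ∈ EdLe n k, fun J => coeff e g * coeff d (∏ i, (sig J i) ^ (e i)) := by
    funext J
    rw [TJ, map_sum, Finset.sum_apply]
    apply Finset.sum_congr rfl
    intro e _
    rw [LinearMap.map_smul, smul_eq_mul]
  rw [h1]
  apply Subalgebra.sum_mem
  intro e _
  have hp : PolyF (fun J : JetSpace n k => ∏ i, (sig J i) ^ (e i)) :=
    polyF_prod (fun i => polyF_pow (polyF_sig i) (e i)) Finset.univ
  have hc : (fun J : JetSpace n k => coeff e g * coeff d (∏ i, (sig J i) ^ (e i))) =
      (fun _ : JetSpace n k => coeff e g) * (fun J => coeff d (∏ i, (sig J i) ^ (e i))) := rfl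
  rw [hc]
  exact Subalgebra.mul_mem _ (const_mem_polyFuns _) (hp d)

/-- key identity: low-degree coefficients of `F g` are computed from the jet of `F` -/
lemma jet_identity {n k : ℕ} (F : FormalDiffeo n) (g : PS n) (d : Fin n →₀ ℕ)
    (hd : deg d ≤ k) : coeff d (TJ (jetOf n k F) g) = coeff d (F g) := by
  classical
  set J := jetOf n k F with hJ
  set tr : PS n := ∑ e ∈ EdLe n k, coeff e g • (monomial e 1 : PS n) with htr
  have hcoefftr : ∀ e : Fin n →₀ ℕ, deg e ≤ k → coeff e tr = coeff e g := by
    intro e he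
    rw [htr, map_sum, Finset.sum_eq_single e]
    · rw [LinearMap.map_smul, smul_eq_mul, MvPowerSeries.coeff_monomial_same, mul_one]
    · intro b _ hb
      rw [LinearMap.map_smul, smul_eq_mul, MvPowerSeries.coeff_monomial, if_neg ?_, mul_zero]
      intro hc
      exact hb (by rw [hc])
    · intro hne
      exact absurd (mem_EdLe.mpr he) hne
  have hgtr : g - tr ∈ Vk n k := by
    intro e he
    rw [map_sub, hcoefftr e he, sub_self]
  have hFtr : F tr = ∑ e ∈ EdLe n k, coeff e g • ∏ i, (F (X i)) ^ (e i) := by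
    rw [htr, map_sum]
    apply Finset.sum_congr rfl
    intro e _
    rw [map_smul, ← prod_X_pow, map_prod]
    congr 1
    apply Finset.prod_congr rfl
    intro i _
    rw [map_pow]
  set π := Ideal.Quotient.mkₐ ℂ (Vk n k) with hπ
  have hqX : ∀ i : Fin n, π (F (X i)) = π (sig J i) := by
    intro i
    have hmem : F (X i) - sig J i ∈ Vk n k := by
      intro e he
      rw [map_sub, coeff_sig, dif_pos he, hJ]
      simp only [jetOf]
      rw [sub_self]
    simp only [hπ, Ideal.Quotient.mkₐ_eq_mk]
    exact (Ideal.Quotient.eq (I := Vk n k)).mpr hmem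
  have hquot : π (F tr) = π (TJ J g) := by
    rw [hFtr, TJ, map_sum, map_sum]
    apply Finset.sum_congr rfl
    intro e _
    rw [map_smul, map_smul, map_prod, map_prod]
    congr 1
    apply Finset.prod_congr rfl
    intro i _
    rw [map_pow, map_pow, hqX]
  have hsub2 : F tr - TJ J g ∈ Vk n k := by
    have := hquot
    simp only [hπ, Ideal.Quotient.mkₐ_eq_mk] at this
    exact (Ideal.Quotient.eq (I := Vk n k)).mp this
  have hsub1 : F g - F tr ∈ Vk n k := by
    rw [← map_sub]
    exact aut_maps_Vk F hgtr
  have hsub : F g - TJ J g ∈ Vk n k := by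
    have := Submodule.add_mem _ hsub1 hsub2
    simpa using this
  have := hsub d hd
  rw [map_sub, sub_eq_zero] at this
  exact this.symm

/-- the main closure argument: if all jets of `F` lie in the Zariski closures of the jets of
the stabilizer of `I`, then `F g` lies in the adic closure of `I` for every `g ∈ I`. -/
lemma mem_sup_Vk_of_jet {n : ℕ} (I : Ideal (PS n)) (F : FormalDiffeo n)
    (hF : ∀ k, jetOf n k F ∈ @closure _ (zTop n k)
      (jetOf n k '' {F' : FormalDiffeo n | ∀ g ∈ I, F' g ∈ I}))
    (g : PS n) (hg : g ∈ I) (k : ℕ) : F g ∈ I ⊔ Vk n k := by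
  classical
  letI : TopologicalSpace (JetSpace n k) := zTop n k
  set pk : PS n →ₗ[ℂ] (Esub n k → ℂ) := LinearMap.pi (fun d => coeff d.1) with hpk
  have hpka : ∀ (v : PS n) (d : Esub n k), pk v d = coeff d.1 v := by
    intro v d
    rw [hpk, LinearMap.pi_apply]
  set W : Submodule ℂ (Esub n k → ℂ) := Submodule.map pk (I.restrictScalars ℂ) with hW
  have hdual : ∀ (ℓ : Module.Dual ℂ (Esub n k → ℂ)) (v : Esub n k → ℂ),
      ℓ v = ∑ d : Esub n k, v d * ℓ (Pi.single d 1) := by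
    intro ℓ v
    conv_lhs => rw [← Finset.univ_sum_single v]
    rw [map_sum]
    apply Finset.sum_congr rfl
    intro d _
    have h1 : (Pi.single d (v d) : Esub n k → ℂ) = v d • (Pi.single d 1 : Esub n k → ℂ) := by
      funext x
      by_cases hx : x = d
      · subst hx
        simp
      · simp [Pi.single_eq_of_ne hx]
    rw [h1, map_smul, smul_eq_mul]
  set C : Set (JetSpace n k) := {J | ∀ ℓ : Module.Dual ℂ (Esub n k → ℂ),
      (∀ y ∈ W, ℓ y = 0) → ℓ (pk (TJ J g)) = 0} with hC
  have hψmem : ∀ ℓ : Module.Dual ℂ (Esub n k → ℂ),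
      (fun J : JetSpace n k => ℓ (pk (TJ J g))) ∈ polyFuns n k := by
    intro ℓ
    have hexp : (fun J : JetSpace n k => ℓ (pk (TJ J g))) =
        ∑ d : Esub n k, fun J : JetSpace n k => coeff d.1 (TJ J g) * ℓ (Pi.single d 1) := by
      funext J
      rw [hdual ℓ (pk (TJ J g)), Finset.sum_apply]
      apply Finset.sum_congr rfl
      intro d _
      rw [hpka]
    rw [hexp]
    apply Subalgebra.sum_mem
    intro d _
    have hc : (fun J : JetSpace n k => coeff d.1 (TJ J g) * ℓ (Pi.single d 1)) =
        (fun J : JetSpace n k => coeff d.1 (TJ J g)) *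
          (fun _ : JetSpace n k => ℓ (Pi.single d 1)) := rfl
    rw [hc]
    exact Subalgebra.mul_mem _ (polyF_TJ g d.1) (const_mem_polyFuns _)
  have hCclosed : IsClosed C := by
    have hCeq : C = ⋂ ℓ : {ℓ : Module.Dual ℂ (Esub n k → ℂ) // ∀ y ∈ W, ℓ y = 0},
        {J : JetSpace n k | ℓ.1 (pk (TJ J g)) = 0} := by
      ext J
      simp only [Set.mem_iInter, Set.mem_setOf_eq, hC]
      exact ⟨fun h ℓ => h ℓ.1 ℓ.2, fun h ℓ hℓ => h ⟨ℓ, hℓ⟩⟩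
    rw [hCeq]
    apply isClosed_iInter
    intro ℓ
    rw [← isOpen_compl_iff]
    have hco : {J : JetSpace n k | ℓ.1 (pk (TJ J g)) = 0}ᶜ =
        {J : JetSpace n k | (fun J => ℓ.1 (pk (TJ J g))) J ≠ 0} := by
      ext J
      simp
    rw [hco]
    exact TopologicalSpace.isOpen_generateFrom_of_mem
      ⟨(fun J : JetSpace n k => ℓ.1 (pk (TJ J g))), hψmem ℓ.1, rfl⟩
  have hjetid : ∀ F' : FormalDiffeo n, pk (TJ (jetOf n k F') g) = pk (F' g) := by
    intro F'
    funext d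
    rw [hpka, hpka]
    exact jet_identity F' g d.1 d.2
  have hjets : jetOf n k '' {F' : FormalDiffeo n | ∀ g ∈ I, F' g ∈ I} ⊆ C := by
    rintro - ⟨F', hF', rfl⟩
    intro ℓ hℓ
    rw [hjetid F']
    apply hℓ
    exact Submodule.mem_map_of_mem (hF' g hg)
  have hsubC : closure (jetOf n k '' {F' : FormalDiffeo n | ∀ g ∈ I, F' g ∈ I}) ⊆ C :=
    closure_minimal hjets hCclosed
  have hmem : jetOf n k F ∈ C := hsubC (hF k)
  have hpkW : pk (F g) ∈ W := by
    by_contra hnot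
    obtain ⟨ℓ, hℓne, hℓbot⟩ := Submodule.exists_dual_map_eq_bot_of_notMem hnot inferInstance
    have hvanish : ∀ y ∈ W, ℓ y = 0 := by
      intro y hy
      have : ℓ y ∈ Submodule.map ℓ W := Submodule.mem_map_of_mem hy
      rw [hℓbot] at this
      simpa using this
    have := hmem ℓ hvanish
    rw [hjetid F] at this
    exact hℓne this
  obtain ⟨h, hhI, hph⟩ := hpkW
  refine Submodule.mem_sup.mpr ⟨h, hhI, F g - h, ?_, by ring⟩
  intro e he
  have := congrFun hph ⟨e, he⟩
  rw [hpka, hpka] at this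
  rw [map_sub, this, sub_self]

end Stab13

/-- for an ideal `I` of `ℂ[[x₁,…,xₙ]]`, the stabilizer
`𝓘_I = {F : I∘F ⊆ I}` is a pro-algebraic subgroup of the group of formal diffeomorphisms,
and moreover `𝓘_I = {F : I∘F = I}`. -/
theorem ideal_stabilizer_proalgebraic {n : ℕ} (I : Ideal (PS n)) :
    -- `𝓘_I` is a subgroup ...
    (∃ H : Subgroup (FormalDiffeo n),
      (H : Set (FormalDiffeo n)) = {F : FormalDiffeo n | ∀ g ∈ I, F g ∈ I}) ∧
    -- ... which is pro-algebraic ...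
    proAlgClosure {F : FormalDiffeo n | ∀ g ∈ I, F g ∈ I} =
      {F : FormalDiffeo n | ∀ g ∈ I, F g ∈ I} ∧
    -- ... and `I∘F ⊆ I` iff `I∘F = I`
    {F : FormalDiffeo n | ∀ g ∈ I, F g ∈ I} =
      {F : FormalDiffeo n | (fun g => F g) '' (I : Set (PS n)) = (I : Set (PS n))} := by
  classical
  refine ⟨⟨{ carrier := {F : FormalDiffeo n | ∀ g ∈ I, F g ∈ I}
             mul_mem' := ?_
             one_mem' := ?_
             inv_mem' := ?_ }, rfl⟩, ?_, ?_⟩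
  · -- multiplication
    intro a b ha hb g hg
    exact ha (b g) (hb g hg)
  · -- identity
    intro g hg
    exact hg
  · -- inverses
    intro F hF g hg
    have : F⁻¹ g = F.symm g := rfl
    rw [this]
    apply (Stab13.stab_mem_iff I F hF (F.symm g)).mpr
    rw [AlgEquiv.apply_symm_apply]
    exact hg
  · -- pro-algebraicity
    apply Set.Subset.antisymm
    · intro F hFc g hg
      exact Stab13.ideal_closed I (F g)
        (fun k => Stab13.mem_sup_Vk_of_jet I F hFc g hg k)
    · intro F hF k
      have hsc := @subset_closure (JetSpace n k) (zTop n k)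
        (jetOf n k '' {F' : FormalDiffeo n | ∀ g ∈ I, F' g ∈ I})
      exact hsc (Set.mem_image_of_mem _ hF)
  · -- `I ∘ F ⊆ I` iff `I ∘ F = I`
    ext F
    constructor
    · intro hF
      exact Stab13.stab_image I F hF
    · intro himg g hg
      have : F g ∈ (fun g => F g) '' (I : Set (PS n)) := Set.mem_image_of_mem _ hg
      rw [himg] at this
      exact this

end
end
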